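/- Soundness of the typing system: if the judgement Π ⊢ G : ⟨φ,Λ⟩ is derivable for a ground g-choreography G, then ⟦G⟧ ≠ ⊥ (G is well-formed), Π = P(G), and for every participant A ∈ Π, φ̂(A) equals the set of labels of the minimal events of the projection ⟦G⟧↾A and Λ̂(A) equals the set of labels of the maximal events of ⟦G⟧↾A. -/

import Mathlib

open scoped Classical

namespace Choreo

/-! ## Labels -/

/-- Communication labels: output `A B!m` and input `A B?m`. -/
inductive Label (P M : Type) where
  | out : P → P → M → Label P M
  | inp : P → P → M → Label P M

variable {P M : Type}

/-- The subject of a label: the sender of an output, the receiver of an input. -/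
def Label.sbj : Label P M → P
  | .out a _ _ => a
  | .inp _ b _ => b

/-- The set `L^!` of output labels (sender and receiver distinct). -/
def Lout : Set (Label P M) := {l | ∃ a b m, a ≠ b ∧ l = .out a b m}

/-- The set `L^?` of input labels (sender and receiver distinct). -/
def Lin : Set (Label P M) := {l | ∃ a b m, a ≠ b ∧ l = .inp a b m}

/-- `L̂(A)`: the labels in `L` whose subject is `A`. -/
def hat (L : Set (Label P M)) (A : P) : Set (Label P M) := {l ∈ L | l.sbj = A}

/-- `sbj(L)`: the set of subjects of the labels in `L`. -/
def sbjSet (L : Set (Label P M)) : Set P := Label.sbj '' L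

/-- `L − Π`: the labels in `L` whose subject is not in `Π`. -/
def lminus (L : Set (Label P M)) (Γ : Set P) : Set (Label P M) := {l ∈ L | l.sbj ∉ Γ}

/-! ## Labelled event structures (events drawn from ℕ) -/

/-- Data of a labelled (prime) event structure over events drawn from `ℕ`. -/
structure ES (P M : Type) where
  ev : Set ℕ
  le : ℕ → ℕ → Prop
  conf : ℕ → ℕ → Prop
  lbl : ℕ → Label P M

namespace ES

variable (E : ES P M)

/-- Configurations: downward-closed conflict-free sets of events. -/
def Config (x : Set ℕ) : Prop :=
  x ⊆ E.ev ∧ (∀ e ∈ x, ∀ f ∈ E.ev, E.le f e → f ∈ x) ∧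
    ∀ e ∈ x, ∀ f ∈ x, ¬ E.conf e f

/-- `MaxC E`: the ⊆-maximal configurations of `E`. -/
def MaxC : Set (Set ℕ) := {x | E.Config x ∧ ∀ y, E.Config y → x ⊆ y → y = x}

/-- Minimal events of `s ⊆ E.ev` with respect to `E.le`. -/
def minIn (s : Set ℕ) : Set ℕ := {e ∈ s | ∀ f ∈ s, E.le f e → f = e}

/-- Maximal events of `s ⊆ E.ev` with respect to `E.le`. -/
def maxIn (s : Set ℕ) : Set ℕ := {e ∈ s | ∀ f ∈ s, E.le e f → f = e}

def minEv : Set ℕ := E.minIn E.ev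
def maxEv : Set ℕ := E.maxIn E.ev

/-- Labels of the minimal events of `E`. -/
def minLbl : Set (Label P M) := E.lbl '' E.minEv

/-- Labels of the maximal events of `E`. -/
def maxLbl : Set (Label P M) := E.lbl '' E.maxEv

/-- All labels occurring in `E`. -/
def lblSet : Set (Label P M) := E.lbl '' E.ev

/-- The projection `E↾A`: the restriction of `E` to the events whose label has subject `A`. -/
def proj (A : P) : ES P M where
  ev := {e ∈ E.ev | (E.lbl e).sbj = A}
  le u v := E.le u v ∧ (u ∈ E.ev ∧ (E.lbl u).sbj = A) ∧ (v ∈ E.ev ∧ (E.lbl v).sbj = A)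
  conf u v := E.conf u v ∧ (u ∈ E.ev ∧ (E.lbl u).sbj = A) ∧ (v ∈ E.ev ∧ (E.lbl v).sbj = A)
  lbl := E.lbl

/-- The projection `x↾A` of a configuration (as a set of events of `E`). -/
def projC (x : Set ℕ) (A : P) : Set ℕ := {e ∈ x | (E.lbl e).sbj = A}

end ES

/-! ## Constructions on event structures -/

/-- Tag for the events of a left component. -/
def tagL (e : ℕ) : ℕ := Nat.pair 0 e
/-- Tag for the events of a right component. -/
def tagR (e : ℕ) : ℕ := Nat.pair 1 e
/-- Tag for the events of the copy of the second component indexed by (the code of) a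
maximal configuration of the first one. -/
def tagC (k e : ℕ) : ℕ := Nat.pair 1 (Nat.pair k e)

/-- A code (injective on finite sets) of sets of naturals. -/
noncomputable def encSet (x : Set ℕ) : ℕ :=
  if h : x.Finite then h.toFinset.sum (fun n => 2 ^ n) else 0

/-- The empty event structure `ε`. -/
noncomputable def esEmpty [Nonempty P] [Nonempty M] : ES P M where
  ev := ∅
  le _ _ := False
  conf _ _ := False
  lbl _ := Label.out Classical.ofNonempty Classical.ofNonempty Classical.ofNonempty

/-- `⟦A→B:m⟧`: two ordered events labelled `A B!m < A B?m`. -/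
def esAct (a b : P) (m : M) : ES P M where
  ev := {0, 1}
  le u v := (u = 0 ∧ v = 0) ∨ (u = 0 ∧ v = 1) ∨ (u = 1 ∧ v = 1)
  conf _ _ := False
  lbl e := if e = 0 then Label.out a b m else Label.inp a b m

/-- Tensor product `E1 ⊗ E2` (componentwise disjoint union). -/
def esTensor (E1 E2 : ES P M) : ES P M where
  ev := (tagL '' E1.ev) ∪ (tagR '' E2.ev)
  le u v := (∃ e ∈ E1.ev, ∃ f ∈ E1.ev, E1.le e f ∧ u = tagL e ∧ v = tagL f) ∨
            (∃ e ∈ E2.ev, ∃ f ∈ E2.ev, E2.le e f ∧ u = tagR e ∧ v = tagR f)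
  conf u v := (∃ e ∈ E1.ev, ∃ f ∈ E1.ev, E1.conf e f ∧ u = tagL e ∧ v = tagL f) ∨
              (∃ e ∈ E2.ev, ∃ f ∈ E2.ev, E2.conf e f ∧ u = tagR e ∧ v = tagR f)
  lbl u := if (Nat.unpair u).1 = 0 then E1.lbl (Nat.unpair u).2 else E2.lbl (Nat.unpair u).2

/-- Sum `E1 + E2`: disjoint union with all cross pairs of events in conflict. -/
def esSum (E1 E2 : ES P M) : ES P M :=
  { esTensor E1 E2 with
    conf := fun u v => (esTensor E1 E2).conf u v ∨
      (∃ e ∈ E1.ev, ∃ f ∈ E2.ev, (u = tagL e ∧ v = tagR f) ∨ (u = tagR f ∧ v = tagL e)) }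

/-- Sequential composition: appends to each maximal configuration `x` of `E1` a disjoint
copy of `E2`, ordering an event of `x` below an event of the copy whenever their labels
have the same subject. -/
noncomputable def esSeq (E1 E2 : ES P M) : ES P M where
  ev := (tagL '' E1.ev) ∪ {u | ∃ x ∈ E1.MaxC, ∃ e ∈ E2.ev, u = tagC (encSet x) e}
  le u v :=
    (∃ e ∈ E1.ev, ∃ f ∈ E1.ev, E1.le e f ∧ u = tagL e ∧ v = tagL f) ∨
    (∃ x ∈ E1.MaxC, ∃ e ∈ E2.ev, ∃ f ∈ E2.ev, E2.le e f ∧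
       u = tagC (encSet x) e ∧ v = tagC (encSet x) f) ∨
    (∃ x ∈ E1.MaxC, ∃ e ∈ x, ∃ f ∈ E2.ev, (E1.lbl e).sbj = (E2.lbl f).sbj ∧
       u = tagL e ∧ v = tagC (encSet x) f)
  conf u v :=
    (∃ e ∈ E1.ev, ∃ f ∈ E1.ev, E1.conf e f ∧ u = tagL e ∧ v = tagL f) ∨
    (∃ x ∈ E1.MaxC, ∃ e ∈ E2.ev, ∃ f ∈ E2.ev, E2.conf e f ∧
       u = tagC (encSet x) e ∧ v = tagC (encSet x) f) ∨
    (∃ x ∈ E1.MaxC, ∃ x' ∈ E1.MaxC, x ≠ x' ∧ ∃ e ∈ E2.ev, ∃ f ∈ E2.ev,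
       u = tagC (encSet x) e ∧ v = tagC (encSet x') f) ∨
    (∃ x ∈ E1.MaxC, ∃ e ∈ E1.ev, (∃ e' ∈ x, E1.conf e e') ∧ ∃ f ∈ E2.ev,
       ((u = tagL e ∧ v = tagC (encSet x) f) ∨ (u = tagC (encSet x) f ∧ v = tagL e)))
  lbl u := if (Nat.unpair u).1 = 0 then E1.lbl (Nat.unpair u).2
           else E2.lbl (Nat.unpair (Nat.unpair u).2).2

/-! ## Well-branchedness -/

/-- Labels of the minimal events of the projection `E↾A`. -/
def minLblP (E : ES P M) (A : P) : Set (Label P M) := (E.proj A).minLbl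

/-- `A` is active for the branches `E1`, `E2`. -/
def active (E1 E2 : ES P M) (A : P) : Prop :=
  minLblP E1 A ≠ ∅ ∧ minLblP E2 A ≠ ∅ ∧
  Disjoint (minLblP E1 A) (minLblP E2 A) ∧
  minLblP E1 A ∪ minLblP E2 A ⊆ Lout

/-- `B` is passive for the branches `E1`, `E2`. -/
def passive (E1 E2 : ES P M) (B : P) : Prop :=
  Disjoint (minLblP E1 B) (minLblP E2 B) ∧
  minLblP E1 B ∪ minLblP E2 B ⊆ Lin ∧
  (minLblP E1 B = ∅ ↔ minLblP E2 B = ∅)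

/-- Well-branchedness: a unique active participant, all other participants passive. -/
def wb (E1 E2 : ES P M) : Prop :=
  ∃ A, active E1 E2 A ∧ (∀ A', active E1 E2 A' → A' = A) ∧
    ∀ B, B ≠ A → passive E1 E2 B

/-! ## Ground g-choreographies and their semantics -/

/-- Ground g-choreographies: `G ::= 0 | A→B:m | G;G | G|G | G+G`. -/
inductive GC (P M : Type) where
  | nil : GC P M
  | act : P → P → M → GC P M
  | seq : GC P M → GC P M → GC P M
  | par : GC P M → GC P M → GC P M
  | cho : GC P M → GC P M → GC P M

/-- `P(G)`: the participants occurring in `G`. -/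
def parts : GC P M → Set P
  | .nil => ∅
  | .act a b _ => {a, b}
  | .seq g1 g2 => parts g1 ∪ parts g2
  | .par g1 g2 => parts g1 ∪ parts g2
  | .cho g1 g2 => parts g1 ∪ parts g2

/-- The semantics `⟦G⟧`: a labelled event structure, or `none` (i.e. `⊥`) when a side
condition fails (the grammar requires `A ≠ B` in interactions; parallel requires disjoint
label sets; choice requires well-branchedness). -/
noncomputable def gsem [Nonempty P] [Nonempty M] : GC P M → Option (ES P M)
  | .nil => some esEmpty
  | .act a b m => if a = b then none else some (esAct a b m)
  | .seq g1 g2 =>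
      match gsem g1, gsem g2 with
      | some E1, some E2 => some (esSeq E1 E2)
      | _, _ => none
  | .par g1 g2 =>
      match gsem g1, gsem g2 with
      | some E1, some E2 =>
          if Disjoint E1.lblSet E2.lblSet then some (esTensor E1 E2) else none
      | _, _ => none
  | .cho g1 g2 =>
      match gsem g1, gsem g2 with
      | some E1, some E2 => if wb E1 E2 then some (esSum E1 E2) else none
      | _, _ => none

/-! ## The typing system -/

/-- Output uniform sets of labels. -/
def outUniform (U V : Set (Label P M)) : Prop := Disjoint U V ∧ U ∪ V ⊆ Lout

/-- Input uniform sets of labels. -/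
def inUniform (U V : Set (Label P M)) : Prop := Disjoint U V ∧ U ∪ V ⊆ Lin

/-- The compatibility condition `compch(φ1,φ2,Π)` of rule t-ch. -/
def compch (φ1 φ2 : Set (Label P M)) (Γ : Set P) : Prop :=
  ∃ A ∈ Γ,
    (outUniform (hat φ1 A) (hat φ2 A) ∧ hat φ1 A ≠ ∅ ∧ hat φ2 A ≠ ∅) ∧
    (∀ A' ∈ Γ, (outUniform (hat φ1 A') (hat φ2 A') ∧ hat φ1 A' ≠ ∅ ∧ hat φ2 A' ≠ ∅) →
        A' = A) ∧
    ∀ B ∈ Γ, B ≠ A →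
      inUniform (hat φ1 B) (hat φ2 B) ∧ (hat φ1 B = ∅ ↔ hat φ2 B = ∅)

/-- The typing judgement `Π ⊢ G : ⟨φ,Λ⟩`. -/
inductive Typing : Set P → GC P M → Set (Label P M) → Set (Label P M) → Prop where
  | temp : Typing ∅ GC.nil ∅ ∅
  | tint {a b : P} {m : M} (hab : a ≠ b) :
      Typing {a, b} (GC.act a b m)
        {Label.out a b m, Label.inp a b m} {Label.out a b m, Label.inp a b m}
  | tseq {Γ1 Γ2 : Set P} {g1 g2 : GC P M} {φ1 φ2 Λ1 Λ2 : Set (Label P M)} :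
      Typing Γ1 g1 φ1 Λ1 → Typing Γ2 g2 φ2 Λ2 →
      Typing (Γ1 ∪ Γ2) (GC.seq g1 g2) (φ1 ∪ lminus φ2 Γ1) (Λ2 ∪ lminus Λ1 Γ2)
  | tpar {Γ1 Γ2 : Set P} {g1 g2 : GC P M} {φ1 φ2 Λ1 Λ2 : Set (Label P M)} :
      Typing Γ1 g1 φ1 Λ1 → Typing Γ2 g2 φ2 Λ2 → Γ1 ∩ Γ2 = ∅ →
      Typing (Γ1 ∪ Γ2) (GC.par g1 g2) (φ1 ∪ φ2) (Λ1 ∪ Λ2)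
  | tch {Γ : Set P} {g1 g2 : GC P M} {φ1 φ2 Λ1 Λ2 : Set (Label P M)} :
      Typing Γ g1 φ1 Λ1 → Typing Γ g2 φ2 Λ2 → compch φ1 φ2 Γ →
      Typing Γ (GC.cho g1 g2) (φ1 ∪ φ2) (Λ1 ∪ Λ2)


/-! ## One-hole contexts and their typing (hole axiom `Γh ⊢ [·] : ⟨φh,Λh⟩`) -/

/-- g-choreography contexts with a single hole. -/
inductive Ctx (P M : Type) where
  | hole : Ctx P M
  | seqL : Ctx P M → GC P M → Ctx P M
  | seqR : GC P M → Ctx P M → Ctx P M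
  | parL : Ctx P M → GC P M → Ctx P M
  | parR : GC P M → Ctx P M → Ctx P M
  | choL : Ctx P M → GC P M → Ctx P M
  | choR : GC P M → Ctx P M → Ctx P M

/-- `C.fill g = C[g]`, the replacement of the hole of `C` by `g`. -/
def Ctx.fill : Ctx P M → GC P M → GC P M
  | .hole, g => g
  | .seqL c g2, g => GC.seq (c.fill g) g2
  | .seqR g1 c, g => GC.seq g1 (c.fill g)
  | .parL c g2, g => GC.par (c.fill g) g2
  | .parR g1 c, g => GC.par g1 (c.fill g)
  | .choL c g2, g => GC.cho (c.fill g) g2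
  | .choR g1 c, g => GC.cho g1 (c.fill g)

/-- Typing of one-hole contexts in the type system extended with the axiom
`Γh ⊢ [·] : ⟨φh,Λh⟩` for the hole. -/
inductive CTyping (Γh : Set P) (φh Λh : Set (Label P M)) :
    Set P → Ctx P M → Set (Label P M) → Set (Label P M) → Prop where
  | hole : CTyping Γh φh Λh Γh Ctx.hole φh Λh
  | seqL {Γ1 Γ2 : Set P} {c : Ctx P M} {g : GC P M} {φ1 φ2 Λ1 Λ2 : Set (Label P M)} :
      CTyping Γh φh Λh Γ1 c φ1 Λ1 → Typing Γ2 g φ2 Λ2 →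
      CTyping Γh φh Λh (Γ1 ∪ Γ2) (Ctx.seqL c g) (φ1 ∪ lminus φ2 Γ1) (Λ2 ∪ lminus Λ1 Γ2)
  | seqR {Γ1 Γ2 : Set P} {g : GC P M} {c : Ctx P M} {φ1 φ2 Λ1 Λ2 : Set (Label P M)} :
      Typing Γ1 g φ1 Λ1 → CTyping Γh φh Λh Γ2 c φ2 Λ2 →
      CTyping Γh φh Λh (Γ1 ∪ Γ2) (Ctx.seqR g c) (φ1 ∪ lminus φ2 Γ1) (Λ2 ∪ lminus Λ1 Γ2)
  | parL {Γ1 Γ2 : Set P} {c : Ctx P M} {g : GC P M} {φ1 φ2 Λ1 Λ2 : Set (Label P M)} :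
      CTyping Γh φh Λh Γ1 c φ1 Λ1 → Typing Γ2 g φ2 Λ2 → Γ1 ∩ Γ2 = ∅ →
      CTyping Γh φh Λh (Γ1 ∪ Γ2) (Ctx.parL c g) (φ1 ∪ φ2) (Λ1 ∪ Λ2)
  | parR {Γ1 Γ2 : Set P} {g : GC P M} {c : Ctx P M} {φ1 φ2 Λ1 Λ2 : Set (Label P M)} :
      Typing Γ1 g φ1 Λ1 → CTyping Γh φh Λh Γ2 c φ2 Λ2 → Γ1 ∩ Γ2 = ∅ →
      CTyping Γh φh Λh (Γ1 ∪ Γ2) (Ctx.parR g c) (φ1 ∪ φ2) (Λ1 ∪ Λ2)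
  | choL {Γ : Set P} {c : Ctx P M} {g : GC P M} {φ1 φ2 Λ1 Λ2 : Set (Label P M)} :
      CTyping Γh φh Λh Γ c φ1 Λ1 → Typing Γ g φ2 Λ2 → compch φ1 φ2 Γ →
      CTyping Γh φh Λh Γ (Ctx.choL c g) (φ1 ∪ φ2) (Λ1 ∪ Λ2)
  | choR {Γ : Set P} {g : GC P M} {c : Ctx P M} {φ1 φ2 Λ1 Λ2 : Set (Label P M)} :
      Typing Γ g φ1 Λ1 → CTyping Γh φh Λh Γ c φ2 Λ2 → compch φ1 φ2 Γ →
      CTyping Γh φh Λh Γ (Ctx.choR g c) (φ1 ∪ φ2) (Λ1 ∪ Λ2)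

/-! ## Refinable actions, t-ref, and refinement -/

/-- The three side conditions of the axiom schema t-ref for the refinable action
`A → m1…mn : B1,…,Bn`, represented by the initiator `A` and the nonempty list
`l = [(m1,B1),…,(mn,Bn)]` with pairwise distinct `Bi`. -/
def trefCond (Γ : Set P) (φ Λ : Set (Label P M)) (A : P) (l : List (M × P)) : Prop :=
  l ≠ [] ∧ (l.map Prod.snd).Nodup ∧
  sbjSet φ = Γ ∧ sbjSet Λ = Γ ∧ sbjSet (φ ∩ Lout) = {A} ∧
  ∀ p ∈ l, ∃ C ∈ Γ, hat Λ p.2 = {Label.inp C p.2 p.1}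

/-- `G ref A→m1…mn:B1,…,Bn`: the ground g-choreography `G` refines the refinable action
given by initiator `A` and list `l = [(m1,B1),…,(mn,Bn)]`. -/
def Refines [Nonempty P] [Nonempty M] (G : GC P M) (A : P) (l : List (M × P)) : Prop :=
  ∃ E : ES P M, gsem G = some E ∧
    sbjSet E.minLbl = {A} ∧
    ∀ x ∈ E.MaxC, ∀ p ∈ l, ∃ C ∈ parts G,
      Label.inp C p.2 p.1 ∈ E.lbl '' (E.maxIn (E.projC x p.2))

/-! ## Multi-hole contexts -/

/-- g-choreography contexts with (numbered) holes. -/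
inductive MCtx (P M : Type) where
  | hole : ℕ → MCtx P M
  | nil : MCtx P M
  | act : P → P → M → MCtx P M
  | seq : MCtx P M → MCtx P M → MCtx P M
  | par : MCtx P M → MCtx P M → MCtx P M
  | cho : MCtx P M → MCtx P M → MCtx P M

/-- The (indices of the) holes occurring in a multi-hole context. -/
def MCtx.holes : MCtx P M → List ℕ
  | .hole i => [i]
  | .nil => []
  | .act _ _ _ => []
  | .seq c1 c2 => c1.holes ++ c2.holes
  | .par c1 c2 => c1.holes ++ c2.holes
  | .cho c1 c2 => c1.holes ++ c2.holes

/-- `C.fill g`: replace each hole `[·]i` by `g i`. -/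
def MCtx.fill : MCtx P M → (ℕ → GC P M) → GC P M
  | .hole i, g => g i
  | .nil, _ => GC.nil
  | .act a b m, _ => GC.act a b m
  | .seq c1 c2, g => GC.seq (c1.fill g) (c2.fill g)
  | .par c1 c2, g => GC.par (c1.fill g) (c2.fill g)
  | .cho c1 c2, g => GC.cho (c1.fill g) (c2.fill g)

/-- Typing of multi-hole contexts in the extended type system, where hole `i` is typed by
the axiom `(σ i).1 ⊢ [·]i : ⟨(σ i).2.1, (σ i).2.2⟩`. -/
inductive MTyping (σ : ℕ → Set P × Set (Label P M) × Set (Label P M)) :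
    Set P → MCtx P M → Set (Label P M) → Set (Label P M) → Prop where
  | hole (i : ℕ) : MTyping σ (σ i).1 (MCtx.hole i) (σ i).2.1 (σ i).2.2
  | temp : MTyping σ ∅ MCtx.nil ∅ ∅
  | tint {a b : P} {m : M} (hab : a ≠ b) :
      MTyping σ {a, b} (MCtx.act a b m)
        {Label.out a b m, Label.inp a b m} {Label.out a b m, Label.inp a b m}
  | tseq {Γ1 Γ2 : Set P} {c1 c2 : MCtx P M} {φ1 φ2 Λ1 Λ2 : Set (Label P M)} :
      MTyping σ Γ1 c1 φ1 Λ1 → MTyping σ Γ2 c2 φ2 Λ2 →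
      MTyping σ (Γ1 ∪ Γ2) (MCtx.seq c1 c2) (φ1 ∪ lminus φ2 Γ1) (Λ2 ∪ lminus Λ1 Γ2)
  | tpar {Γ1 Γ2 : Set P} {c1 c2 : MCtx P M} {φ1 φ2 Λ1 Λ2 : Set (Label P M)} :
      MTyping σ Γ1 c1 φ1 Λ1 → MTyping σ Γ2 c2 φ2 Λ2 → Γ1 ∩ Γ2 = ∅ →
      MTyping σ (Γ1 ∪ Γ2) (MCtx.par c1 c2) (φ1 ∪ φ2) (Λ1 ∪ Λ2)
  | tch {Γ : Set P} {c1 c2 : MCtx P M} {φ1 φ2 Λ1 Λ2 : Set (Label P M)} :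
      MTyping σ Γ c1 φ1 Λ1 → MTyping σ Γ c2 φ2 Λ2 → compch φ1 φ2 Γ →
      MTyping σ Γ (MCtx.cho c1 c2) (φ1 ∪ φ2) (Λ1 ∪ Λ2)

/-! ### Auxiliary machinery for the soundness proof -/

section SoundnessAux

lemma tagL_injective : Function.Injective tagL := by
  intro e f h; simpa [tagL, Nat.pair_eq_pair] using h

lemma tagR_injective : Function.Injective tagR := by
  intro e f h; simpa [tagR, Nat.pair_eq_pair] using h

lemma tagL_ne_tagR {e f : ℕ} : tagL e ≠ tagR f := by
  simp [tagL, tagR, Nat.pair_eq_pair]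

lemma tagL_ne_tagC {e k f : ℕ} : tagL e ≠ tagC k f := by
  simp [tagL, tagC, Nat.pair_eq_pair]

lemma tagC_inj {k k' e e' : ℕ} (h : tagC k e = tagC k' e') : k = k' ∧ e = e' := by
  simpa [tagC, Nat.pair_eq_pair] using h

lemma sum_two_pow_sort (s : Finset ℕ) :
    ((s.sort (· ≤ ·)).map (fun i => 2 ^ i)).sum = s.sum fun n => 2 ^ n := by
  rw [Finset.sum, ← Finset.sort_eq s (· ≤ ·), Multiset.map_coe, Multiset.sum_coe]

lemma encSet_inj {x y : Set ℕ} (hx : x.Finite) (hy : y.Finite)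
    (h : encSet x = encSet y) : x = y := by
  have key : ∀ s : Finset ℕ, Nat.bitIndices (s.sum fun n => 2 ^ n) = s.sort (· ≤ ·) := by
    intro s
    rw [← sum_two_pow_sort]
    exact Nat.bitIndices_twoPowsum (Finset.sortedLT_sort s)
  rw [encSet, dif_pos hx, encSet, dif_pos hy] at h
  have h2 : hx.toFinset.sort (· ≤ ·) = hy.toFinset.sort (· ≤ ·) := by
    rw [← key, ← key, h]
  have h3 : hx.toFinset = hy.toFinset := by
    ext a
    rw [← Finset.mem_sort (α := ℕ) (· ≤ ·), h2, Finset.mem_sort]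
  rw [← Set.Finite.coe_toFinset hx, ← Set.Finite.coe_toFinset hy, h3]

variable {P M : Type}

lemma tensor_lbl_L (E1 E2 : ES P M) (e : ℕ) : (esTensor E1 E2).lbl (tagL e) = E1.lbl e := by
  simp [esTensor, tagL, Nat.unpair_pair]

lemma tensor_lbl_R (E1 E2 : ES P M) (e : ℕ) : (esTensor E1 E2).lbl (tagR e) = E2.lbl e := by
  simp [esTensor, tagR, Nat.unpair_pair]

lemma seq_lbl_L (E1 E2 : ES P M) (e : ℕ) : (esSeq E1 E2).lbl (tagL e) = E1.lbl e := by
  simp [esSeq, tagL, Nat.unpair_pair]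

lemma seq_lbl_C (E1 E2 : ES P M) (k e : ℕ) : (esSeq E1 E2).lbl (tagC k e) = E2.lbl e := by
  simp [esSeq, tagC, Nat.unpair_pair]

/-- The extended invariant carried through the induction. -/
structure Inv (Γ : Set P) (E : ES P M) : Prop where
  fin : E.ev.Finite
  conf_symm : ∀ {u v}, E.conf u v → E.conf v u
  sbj_mem : ∀ e ∈ E.ev, (E.lbl e).sbj ∈ Γ
  part_ev : ∀ A ∈ Γ, ∃ e ∈ E.ev, (E.lbl e).sbj = A
  ev_maxc : ∀ e ∈ E.ev, ∃ x ∈ E.MaxC, e ∈ x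
  maxc_ne : ∃ x, x ∈ E.MaxC
  maxc_part : ∀ x ∈ E.MaxC, ∀ A ∈ Γ, ∃ e ∈ x, (E.lbl e).sbj = A

lemma maxC_subset {E : ES P M} {x : Set ℕ} (h : x ∈ E.MaxC) : x ⊆ E.ev := h.1.1

lemma Inv.maxc_fin {Γ : Set P} {E : ES P M} (h : Inv Γ E) {x : Set ℕ}
    (hx : x ∈ E.MaxC) : x.Finite := h.fin.subset (maxC_subset hx)

lemma Inv.maxc_nonempty {Γ : Set P} {E : ES P M} (h : Inv Γ E)
    (he : E.ev.Nonempty) {x : Set ℕ} (hx : x ∈ E.MaxC) : x.Nonempty := by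
  rcases he with ⟨e, he⟩
  obtain ⟨x₀, hx₀, hex₀⟩ := h.ev_maxc e he
  rcases Set.eq_empty_or_nonempty x with hxe | hne
  · subst hxe
    have := hx.2 x₀ hx₀.1 (Set.empty_subset _)
    exact absurd (this ▸ hex₀) (by simp)
  · exact hne

lemma Inv.encSet_maxc_inj {Γ : Set P} {E : ES P M} (h : Inv Γ E) {x x' : Set ℕ}
    (hx : x ∈ E.MaxC) (hx' : x' ∈ E.MaxC) (hk : encSet x = encSet x') : x = x' :=
  encSet_inj (h.maxc_fin hx) (h.maxc_fin hx') hk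

lemma config_empty (E : ES P M) : E.Config ∅ :=
  ⟨Set.empty_subset _, by simp, by simp⟩

lemma minIn_subset (E : ES P M) (s : Set ℕ) : E.minIn s ⊆ s := fun _ he => he.1
lemma maxIn_subset (E : ES P M) (s : Set ℕ) : E.maxIn s ⊆ s := fun _ he => he.1

lemma mem_proj_ev {E : ES P M} {A : P} {u : ℕ} :
    u ∈ (E.proj A).ev ↔ u ∈ E.ev ∧ (E.lbl u).sbj = A := Iff.rfl

end SoundnessAux
section TensorAux

variable {P M : Type} {E1 E2 : ES P M}

lemma tensor_le_iff {u v : ℕ} :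
    (esTensor E1 E2).le u v ↔
      (∃ e ∈ E1.ev, ∃ f ∈ E1.ev, E1.le e f ∧ u = tagL e ∧ v = tagL f) ∨
      (∃ e ∈ E2.ev, ∃ f ∈ E2.ev, E2.le e f ∧ u = tagR e ∧ v = tagR f) := Iff.rfl

lemma tensor_conf_iff {u v : ℕ} :
    (esTensor E1 E2).conf u v ↔
      (∃ e ∈ E1.ev, ∃ f ∈ E1.ev, E1.conf e f ∧ u = tagL e ∧ v = tagL f) ∨
      (∃ e ∈ E2.ev, ∃ f ∈ E2.ev, E2.conf e f ∧ u = tagR e ∧ v = tagR f) := Iff.rfl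

lemma mem_tensor_ev {u : ℕ} :
    u ∈ (esTensor E1 E2).ev ↔
      (∃ e ∈ E1.ev, u = tagL e) ∨ ∃ f ∈ E2.ev, u = tagR f := by
  constructor
  · rintro (⟨e, he, rfl⟩ | ⟨f, hf, rfl⟩)
    · exact Or.inl ⟨e, he, rfl⟩
    · exact Or.inr ⟨f, hf, rfl⟩
  · rintro (⟨e, he, rfl⟩ | ⟨f, hf, rfl⟩)
    · exact Or.inl ⟨e, he, rfl⟩
    · exact Or.inr ⟨f, hf, rfl⟩

lemma preL_eq {x y : Set ℕ} : tagL ⁻¹' (tagL '' x ∪ tagR '' y) = x := by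
  ext e
  simp only [Set.mem_preimage, Set.mem_union, Set.mem_image]
  constructor
  · rintro (⟨a, ha, hEq⟩ | ⟨b, hb, hEq⟩)
    · rwa [← tagL_injective hEq]
    · exact absurd hEq.symm tagL_ne_tagR
  · exact fun he => Or.inl ⟨e, he, rfl⟩

lemma preR_eq {x y : Set ℕ} : tagR ⁻¹' (tagL '' x ∪ tagR '' y) = y := by
  ext e
  simp only [Set.mem_preimage, Set.mem_union, Set.mem_image]
  constructor
  · rintro (⟨a, ha, hEq⟩ | ⟨b, hb, hEq⟩)
    · exact absurd hEq tagL_ne_tagR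
    · rwa [← tagR_injective hEq]
  · exact fun he => Or.inr ⟨e, he, rfl⟩


lemma preL_imgR {y : Set ℕ} : tagL ⁻¹' (tagR '' y) = ∅ := by
  ext e
  simp only [Set.mem_preimage, Set.mem_image, Set.mem_empty_iff_false, iff_false]
  rintro ⟨b, hb, hEq⟩
  exact tagL_ne_tagR hEq.symm

lemma preR_imgL {x : Set ℕ} : tagR ⁻¹' (tagL '' x) = ∅ := by
  ext e
  simp only [Set.mem_preimage, Set.mem_image, Set.mem_empty_iff_false, iff_false]
  rintro ⟨b, hb, hEq⟩
  exact tagL_ne_tagR hEq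

lemma memL_of_union {x y : Set ℕ} {e : ℕ} (h : tagL e ∈ tagL '' x ∪ tagR '' y) : e ∈ x := by
  rcases h with ⟨c, hc, hEq⟩ | ⟨c, hc, hEq⟩
  · rwa [tagL_injective hEq] at hc
  · exact (tagL_ne_tagR hEq.symm).elim

lemma memR_of_union {x y : Set ℕ} {f : ℕ} (h : tagR f ∈ tagL '' x ∪ tagR '' y) : f ∈ y := by
  rcases h with ⟨c, hc, hEq⟩ | ⟨c, hc, hEq⟩
  · exact (tagL_ne_tagR hEq).elim
  · rwa [tagR_injective hEq] at hc

lemma tensor_config_iff {z : Set ℕ} :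
    (esTensor E1 E2).Config z ↔
      ∃ x y, E1.Config x ∧ E2.Config y ∧ z = tagL '' x ∪ tagR '' y := by
  constructor
  · rintro ⟨hsub, hdc, hcf⟩
    refine ⟨tagL ⁻¹' z, tagR ⁻¹' z, ⟨?_, ?_, ?_⟩, ⟨?_, ?_, ?_⟩, ?_⟩
    · intro e he
      rcases mem_tensor_ev.mp (hsub he) with ⟨a, ha, hEq⟩ | ⟨b, hb, hEq⟩
      · rwa [tagL_injective hEq]
      · exact absurd hEq tagL_ne_tagR
    · intro e he f hf hle
      have hmem : e ∈ E1.ev := by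
        rcases mem_tensor_ev.mp (hsub he) with ⟨a, ha, hEq⟩ | ⟨b, hb, hEq⟩
        · rwa [tagL_injective hEq]
        · exact absurd hEq tagL_ne_tagR
      exact hdc _ he _ (mem_tensor_ev.mpr (Or.inl ⟨f, hf, rfl⟩))
        (Or.inl ⟨f, hf, e, hmem, hle, rfl, rfl⟩)
    · intro e he f hf hc
      have hmem : e ∈ E1.ev := by
        rcases mem_tensor_ev.mp (hsub he) with ⟨a, ha, hEq⟩ | ⟨b, hb, hEq⟩
        · rwa [tagL_injective hEq]
        · exact absurd hEq tagL_ne_tagR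
      have hmemf : f ∈ E1.ev := by
        rcases mem_tensor_ev.mp (hsub hf) with ⟨a, ha, hEq⟩ | ⟨b, hb, hEq⟩
        · rwa [tagL_injective hEq]
        · exact absurd hEq tagL_ne_tagR
      exact hcf _ he _ hf (Or.inl ⟨e, hmem, f, hmemf, hc, rfl, rfl⟩)
    · intro e he
      rcases mem_tensor_ev.mp (hsub he) with ⟨a, ha, hEq⟩ | ⟨b, hb, hEq⟩
      · exact absurd hEq tagL_ne_tagR.symm
      · rwa [tagR_injective hEq]
    · intro e he f hf hle
      have hmem : e ∈ E2.ev := by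
        rcases mem_tensor_ev.mp (hsub he) with ⟨a, ha, hEq⟩ | ⟨b, hb, hEq⟩
        · exact absurd hEq tagL_ne_tagR.symm
        · rwa [tagR_injective hEq]
      exact hdc _ he _ (mem_tensor_ev.mpr (Or.inr ⟨f, hf, rfl⟩))
        (Or.inr ⟨f, hf, e, hmem, hle, rfl, rfl⟩)
    · intro e he f hf hc
      have hmem : e ∈ E2.ev := by
        rcases mem_tensor_ev.mp (hsub he) with ⟨a, ha, hEq⟩ | ⟨b, hb, hEq⟩
        · exact absurd hEq tagL_ne_tagR.symm
        · rwa [tagR_injective hEq]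
      have hmemf : f ∈ E2.ev := by
        rcases mem_tensor_ev.mp (hsub hf) with ⟨a, ha, hEq⟩ | ⟨b, hb, hEq⟩
        · exact absurd hEq tagL_ne_tagR.symm
        · rwa [tagR_injective hEq]
      exact hcf _ he _ hf (Or.inr ⟨e, hmem, f, hmemf, hc, rfl, rfl⟩)
    · ext u
      constructor
      · intro hu
        rcases mem_tensor_ev.mp (hsub hu) with ⟨a, ha, rfl⟩ | ⟨b, hb, rfl⟩
        · exact Or.inl ⟨a, hu, rfl⟩
        · exact Or.inr ⟨b, hu, rfl⟩
      · rintro (⟨a, ha, rfl⟩ | ⟨b, hb, rfl⟩)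
        · exact ha
        · exact hb
  · rintro ⟨x, y, hx, hy, rfl⟩
    refine ⟨?_, ?_, ?_⟩
    · rintro u (⟨a, ha, rfl⟩ | ⟨b, hb, rfl⟩)
      · exact mem_tensor_ev.mpr (Or.inl ⟨a, hx.1 ha, rfl⟩)
      · exact mem_tensor_ev.mpr (Or.inr ⟨b, hy.1 hb, rfl⟩)
    · rintro v hv u hu hle
      rcases hle with ⟨a, ha, b, hb, hab, rfl, rfl⟩ | ⟨a, ha, b, hb, hab, rfl, rfl⟩
      · exact Or.inl ⟨a, hx.2.1 b (memL_of_union hv) a ha hab, rfl⟩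
      · exact Or.inr ⟨a, hy.2.1 b (memR_of_union hv) a ha hab, rfl⟩
    · rintro u hu v hv hconf
      rcases hconf with ⟨a, ha, b, hb, hab, rfl, rfl⟩ | ⟨a, ha, b, hb, hab, rfl, rfl⟩
      · exact hx.2.2 a (memL_of_union hu) b (memL_of_union hv) hab
      · exact hy.2.2 a (memR_of_union hu) b (memR_of_union hv) hab

lemma tensor_maxC_iff {z : Set ℕ} :
    z ∈ (esTensor E1 E2).MaxC ↔
      ∃ x ∈ E1.MaxC, ∃ y ∈ E2.MaxC, z = tagL '' x ∪ tagR '' y := by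
  constructor
  · rintro ⟨hcfg, hmax⟩
    obtain ⟨x, y, hx, hy, rfl⟩ := tensor_config_iff.mp hcfg
    refine ⟨x, ⟨hx, ?_⟩, y, ⟨hy, ?_⟩, rfl⟩
    · intro x' hx' hsub
      have hz' : (esTensor E1 E2).Config (tagL '' x' ∪ tagR '' y) :=
        tensor_config_iff.mpr ⟨x', y, hx', hy, rfl⟩
      have hzz : tagL '' x ∪ tagR '' y ⊆ tagL '' x' ∪ tagR '' y := by
        apply Set.union_subset_union_left
        exact Set.image_mono hsub
      have := hmax _ hz' hzz
      have := congrArg (tagL ⁻¹' ·) this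
      simpa [Set.preimage_union, Set.preimage_image_eq _ tagL_injective, preL_imgR]
        using this
    · intro y' hy' hsub
      have hz' : (esTensor E1 E2).Config (tagL '' x ∪ tagR '' y') :=
        tensor_config_iff.mpr ⟨x, y', hx, hy', rfl⟩
      have hzz : tagL '' x ∪ tagR '' y ⊆ tagL '' x ∪ tagR '' y' := by
        apply Set.union_subset_union_right
        exact Set.image_mono hsub
      have := hmax _ hz' hzz
      have := congrArg (tagR ⁻¹' ·) this
      simpa [Set.preimage_union, Set.preimage_image_eq _ tagR_injective, preR_imgL]
        using this
  · rintro ⟨x, hx, y, hy, rfl⟩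
    refine ⟨tensor_config_iff.mpr ⟨x, y, hx.1, hy.1, rfl⟩, ?_⟩
    intro w hw hsub
    obtain ⟨x', y', hx', hy', rfl⟩ := tensor_config_iff.mp hw
    have h1 : x ⊆ x' := by
      intro e he
      have : tagL e ∈ tagL '' x' ∪ tagR '' y' := hsub (Or.inl ⟨e, he, rfl⟩)
      rcases this with ⟨a, ha, hEq⟩ | ⟨b, hb, hEq⟩
      · rwa [← tagL_injective hEq]
      · exact absurd hEq.symm tagL_ne_tagR
    have h2 : y ⊆ y' := by
      intro e he
      have : tagR e ∈ tagL '' x' ∪ tagR '' y' := hsub (Or.inr ⟨e, he, rfl⟩)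
      rcases this with ⟨a, ha, hEq⟩ | ⟨b, hb, hEq⟩
      · exact absurd hEq tagL_ne_tagR
      · rwa [← tagR_injective hEq]
    rw [hx.2 x' hx' h1, hy.2 y' hy' h2]

end TensorAux
section TensorProj

variable {P M : Type} {E1 E2 : ES P M}

lemma tensor_proj_minEv (A : P) :
    ((esTensor E1 E2).proj A).minEv =
      tagL '' (E1.proj A).minEv ∪ tagR '' (E2.proj A).minEv := by
  ext u
  constructor
  · rintro ⟨⟨huT, huA⟩, hmin⟩
    rcases mem_tensor_ev.mp huT with ⟨e, he, rfl⟩ | ⟨f, hf, rfl⟩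
    · have heA : (E1.lbl e).sbj = A := by rwa [tensor_lbl_L] at huA
      refine Or.inl ⟨e, ⟨⟨he, heA⟩, ?_⟩, rfl⟩
      intro f hfp hlef
      have hmemf : tagL f ∈ (esTensor E1 E2).ev := mem_tensor_ev.mpr (Or.inl ⟨f, hfp.1, rfl⟩)
      have hsbjf : ((esTensor E1 E2).lbl (tagL f)).sbj = A := by
        rw [tensor_lbl_L]; exact hfp.2
      have := hmin (tagL f) ⟨hmemf, hsbjf⟩
        ⟨Or.inl ⟨f, hfp.1, e, he, hlef.1, rfl, rfl⟩, ⟨hmemf, hsbjf⟩, ⟨huT, huA⟩⟩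
      exact tagL_injective this
    · have hfA : (E2.lbl f).sbj = A := by rwa [tensor_lbl_R] at huA
      refine Or.inr ⟨f, ⟨⟨hf, hfA⟩, ?_⟩, rfl⟩
      intro g hgp hlef
      have hmemg : tagR g ∈ (esTensor E1 E2).ev := mem_tensor_ev.mpr (Or.inr ⟨g, hgp.1, rfl⟩)
      have hsbjg : ((esTensor E1 E2).lbl (tagR g)).sbj = A := by
        rw [tensor_lbl_R]; exact hgp.2
      have := hmin (tagR g) ⟨hmemg, hsbjg⟩
        ⟨Or.inr ⟨g, hgp.1, f, hf, hlef.1, rfl, rfl⟩, ⟨hmemg, hsbjg⟩, ⟨huT, huA⟩⟩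
      exact tagR_injective this
  · rintro (⟨e, ⟨⟨he, heA⟩, hemin⟩, rfl⟩ | ⟨f, ⟨⟨hf, hfA⟩, hfmin⟩, rfl⟩)
    · have hmem : tagL e ∈ (esTensor E1 E2).ev := mem_tensor_ev.mpr (Or.inl ⟨e, he, rfl⟩)
      have hsbj : ((esTensor E1 E2).lbl (tagL e)).sbj = A := by rw [tensor_lbl_L]; exact heA
      refine ⟨⟨hmem, hsbj⟩, ?_⟩
      rintro u ⟨huT, huA⟩ ⟨hTle, _, _⟩
      rcases hTle with ⟨a, ha, b, hb, hab, rfl, hEq⟩ | ⟨a, ha, b, hb, hab, rfl, hEq⟩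
      · cases tagL_injective hEq
        have haA : (E1.lbl a).sbj = A := by rwa [tensor_lbl_L] at huA
        have := hemin a ⟨ha, haA⟩ ⟨hab, ⟨ha, haA⟩, ⟨he, heA⟩⟩
        rw [this]
      · exact (tagL_ne_tagR hEq).elim
    · have hmem : tagR f ∈ (esTensor E1 E2).ev := mem_tensor_ev.mpr (Or.inr ⟨f, hf, rfl⟩)
      have hsbj : ((esTensor E1 E2).lbl (tagR f)).sbj = A := by rw [tensor_lbl_R]; exact hfA
      refine ⟨⟨hmem, hsbj⟩, ?_⟩
      rintro u ⟨huT, huA⟩ ⟨hTle, _, _⟩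
      rcases hTle with ⟨a, ha, b, hb, hab, rfl, hEq⟩ | ⟨a, ha, b, hb, hab, rfl, hEq⟩
      · exact (tagL_ne_tagR hEq.symm).elim
      · cases tagR_injective hEq
        have haA : (E2.lbl a).sbj = A := by rwa [tensor_lbl_R] at huA
        have := hfmin a ⟨ha, haA⟩ ⟨hab, ⟨ha, haA⟩, ⟨hf, hfA⟩⟩
        rw [this]

end TensorProj
section TensorProj2

variable {P M : Type} {E1 E2 : ES P M}

lemma tensor_proj_maxEv (A : P) :
    ((esTensor E1 E2).proj A).maxEv =
      tagL '' (E1.proj A).maxEv ∪ tagR '' (E2.proj A).maxEv := by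
  ext u
  constructor
  · rintro ⟨⟨huT, huA⟩, hmax⟩
    rcases mem_tensor_ev.mp huT with ⟨e, he, rfl⟩ | ⟨f, hf, rfl⟩
    · have heA : (E1.lbl e).sbj = A := by rwa [tensor_lbl_L] at huA
      refine Or.inl ⟨e, ⟨⟨he, heA⟩, ?_⟩, rfl⟩
      intro f hfp hlef
      have hmemf : tagL f ∈ (esTensor E1 E2).ev := mem_tensor_ev.mpr (Or.inl ⟨f, hfp.1, rfl⟩)
      have hsbjf : ((esTensor E1 E2).lbl (tagL f)).sbj = A := by
        rw [tensor_lbl_L]; exact hfp.2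
      have := hmax (tagL f) ⟨hmemf, hsbjf⟩
        ⟨Or.inl ⟨e, he, f, hfp.1, hlef.1, rfl, rfl⟩, ⟨huT, huA⟩, ⟨hmemf, hsbjf⟩⟩
      exact tagL_injective this
    · have hfA : (E2.lbl f).sbj = A := by rwa [tensor_lbl_R] at huA
      refine Or.inr ⟨f, ⟨⟨hf, hfA⟩, ?_⟩, rfl⟩
      intro g hgp hlef
      have hmemg : tagR g ∈ (esTensor E1 E2).ev := mem_tensor_ev.mpr (Or.inr ⟨g, hgp.1, rfl⟩)
      have hsbjg : ((esTensor E1 E2).lbl (tagR g)).sbj = A := by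
        rw [tensor_lbl_R]; exact hgp.2
      have := hmax (tagR g) ⟨hmemg, hsbjg⟩
        ⟨Or.inr ⟨f, hf, g, hgp.1, hlef.1, rfl, rfl⟩, ⟨huT, huA⟩, ⟨hmemg, hsbjg⟩⟩
      exact tagR_injective this
  · rintro (⟨e, ⟨⟨he, heA⟩, hemax⟩, rfl⟩ | ⟨f, ⟨⟨hf, hfA⟩, hfmax⟩, rfl⟩)
    · have hmem : tagL e ∈ (esTensor E1 E2).ev := mem_tensor_ev.mpr (Or.inl ⟨e, he, rfl⟩)
      have hsbj : ((esTensor E1 E2).lbl (tagL e)).sbj = A := by rw [tensor_lbl_L]; exact heA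
      refine ⟨⟨hmem, hsbj⟩, ?_⟩
      rintro u ⟨huT, huA⟩ ⟨hTle, _, _⟩
      rcases hTle with ⟨a, ha, b, hb, hab, hEq, rfl⟩ | ⟨a, ha, b, hb, hab, hEq, rfl⟩
      · cases tagL_injective hEq
        have hbA : (E1.lbl b).sbj = A := by rwa [tensor_lbl_L] at huA
        have := hemax b ⟨hb, hbA⟩ ⟨hab, ⟨he, heA⟩, ⟨hb, hbA⟩⟩
        rw [this]
      · exact (tagL_ne_tagR hEq).elim
    · have hmem : tagR f ∈ (esTensor E1 E2).ev := mem_tensor_ev.mpr (Or.inr ⟨f, hf, rfl⟩)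
      have hsbj : ((esTensor E1 E2).lbl (tagR f)).sbj = A := by rw [tensor_lbl_R]; exact hfA
      refine ⟨⟨hmem, hsbj⟩, ?_⟩
      rintro u ⟨huT, huA⟩ ⟨hTle, _, _⟩
      rcases hTle with ⟨a, ha, b, hb, hab, hEq, rfl⟩ | ⟨a, ha, b, hb, hab, hEq, rfl⟩
      · exact (tagL_ne_tagR hEq.symm).elim
      · cases tagR_injective hEq
        have hbA : (E2.lbl b).sbj = A := by rwa [tensor_lbl_R] at huA
        have := hfmax b ⟨hb, hbA⟩ ⟨hab, ⟨hf, hfA⟩, ⟨hb, hbA⟩⟩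
        rw [this]

lemma tensor_proj_minLbl (A : P) :
    ((esTensor E1 E2).proj A).minLbl = (E1.proj A).minLbl ∪ (E2.proj A).minLbl := by
  show (esTensor E1 E2).lbl '' _ = E1.lbl '' _ ∪ E2.lbl '' _
  rw [tensor_proj_minEv, Set.image_union, ← Set.image_comp, ← Set.image_comp]
  congr 1
  · exact Set.image_congr fun a _ => tensor_lbl_L E1 E2 a
  · exact Set.image_congr fun a _ => tensor_lbl_R E1 E2 a

lemma tensor_proj_maxLbl (A : P) :
    ((esTensor E1 E2).proj A).maxLbl = (E1.proj A).maxLbl ∪ (E2.proj A).maxLbl := by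
  show (esTensor E1 E2).lbl '' _ = E1.lbl '' _ ∪ E2.lbl '' _
  rw [tensor_proj_maxEv, Set.image_union, ← Set.image_comp, ← Set.image_comp]
  congr 1
  · exact Set.image_congr fun a _ => tensor_lbl_L E1 E2 a
  · exact Set.image_congr fun a _ => tensor_lbl_R E1 E2 a

lemma sum_proj_minLbl (A : P) :
    ((esSum E1 E2).proj A).minLbl = ((esTensor E1 E2).proj A).minLbl := rfl

lemma sum_proj_maxLbl (A : P) :
    ((esSum E1 E2).proj A).maxLbl = ((esTensor E1 E2).proj A).maxLbl := rfl

lemma inv_tensor {Γ1 Γ2 : Set P} (h1 : Inv Γ1 E1) (h2 : Inv Γ2 E2) :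
    Inv (Γ1 ∪ Γ2) (esTensor E1 E2) where
  fin := (h1.fin.image tagL).union (h2.fin.image tagR)
  conf_symm := by
    rintro u v (⟨a, ha, b, hb, hab, rfl, rfl⟩ | ⟨a, ha, b, hb, hab, rfl, rfl⟩)
    · exact Or.inl ⟨b, hb, a, ha, h1.conf_symm hab, rfl, rfl⟩
    · exact Or.inr ⟨b, hb, a, ha, h2.conf_symm hab, rfl, rfl⟩
  sbj_mem := by
    intro e he
    rcases mem_tensor_ev.mp he with ⟨a, ha, rfl⟩ | ⟨b, hb, rfl⟩
    · rw [tensor_lbl_L]; exact Or.inl (h1.sbj_mem a ha)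
    · rw [tensor_lbl_R]; exact Or.inr (h2.sbj_mem b hb)
  part_ev := by
    rintro A (hA | hA)
    · obtain ⟨e, he, hs⟩ := h1.part_ev A hA
      exact ⟨tagL e, mem_tensor_ev.mpr (Or.inl ⟨e, he, rfl⟩), by rw [tensor_lbl_L]; exact hs⟩
    · obtain ⟨e, he, hs⟩ := h2.part_ev A hA
      exact ⟨tagR e, mem_tensor_ev.mpr (Or.inr ⟨e, he, rfl⟩), by rw [tensor_lbl_R]; exact hs⟩
  ev_maxc := by
    intro u hu
    rcases mem_tensor_ev.mp hu with ⟨a, ha, rfl⟩ | ⟨b, hb, rfl⟩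
    · obtain ⟨x, hx, hax⟩ := h1.ev_maxc a ha
      obtain ⟨y, hy⟩ := h2.maxc_ne
      exact ⟨_, tensor_maxC_iff.mpr ⟨x, hx, y, hy, rfl⟩, Or.inl ⟨a, hax, rfl⟩⟩
    · obtain ⟨y, hy, hby⟩ := h2.ev_maxc b hb
      obtain ⟨x, hx⟩ := h1.maxc_ne
      exact ⟨_, tensor_maxC_iff.mpr ⟨x, hx, y, hy, rfl⟩, Or.inr ⟨b, hby, rfl⟩⟩
  maxc_ne := by
    obtain ⟨x, hx⟩ := h1.maxc_ne
    obtain ⟨y, hy⟩ := h2.maxc_ne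
    exact ⟨_, tensor_maxC_iff.mpr ⟨x, hx, y, hy, rfl⟩⟩
  maxc_part := by
    intro z hz A hA
    obtain ⟨x, hx, y, hy, rfl⟩ := tensor_maxC_iff.mp hz
    rcases hA with hA | hA
    · obtain ⟨e, he, hs⟩ := h1.maxc_part x hx A hA
      exact ⟨tagL e, Or.inl ⟨e, he, rfl⟩, by rw [tensor_lbl_L]; exact hs⟩
    · obtain ⟨e, he, hs⟩ := h2.maxc_part y hy A hA
      exact ⟨tagR e, Or.inr ⟨e, he, rfl⟩, by rw [tensor_lbl_R]; exact hs⟩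

end TensorProj2
section SumAux

variable {P M : Type} {E1 E2 : ES P M}

lemma sum_ev_eq : (esSum E1 E2).ev = (esTensor E1 E2).ev := rfl

lemma sum_conf_iff {u v : ℕ} :
    (esSum E1 E2).conf u v ↔ (esTensor E1 E2).conf u v ∨
      (∃ e ∈ E1.ev, ∃ f ∈ E2.ev, (u = tagL e ∧ v = tagR f) ∨ (u = tagR f ∧ v = tagL e)) :=
  Iff.rfl

lemma sum_config_tensor {z : Set ℕ} (h : (esSum E1 E2).Config z) :
    (esTensor E1 E2).Config z :=
  ⟨h.1, h.2.1, fun e he f hf hc => h.2.2 e he f hf (Or.inl hc)⟩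

lemma sum_config_iff {z : Set ℕ} :
    (esSum E1 E2).Config z ↔
      (∃ x, E1.Config x ∧ z = tagL '' x) ∨ (∃ y, E2.Config y ∧ z = tagR '' y) := by
  constructor
  · intro hz
    obtain ⟨x, y, hx, hy, rfl⟩ := tensor_config_iff.mp (sum_config_tensor hz)
    rcases Set.eq_empty_or_nonempty y with hye | ⟨f, hf⟩
    · subst hye
      exact Or.inl ⟨x, hx, by simp⟩
    rcases Set.eq_empty_or_nonempty x with hxe | ⟨e, he⟩
    · subst hxe
      exact Or.inr ⟨y, hy, by simp⟩
    exfalso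
    exact hz.2.2 (tagL e) (Or.inl ⟨e, he, rfl⟩) (tagR f) (Or.inr ⟨f, hf, rfl⟩)
      (Or.inr ⟨e, hx.1 he, f, hy.1 hf, Or.inl ⟨rfl, rfl⟩⟩)
  · rintro (⟨x, hx, rfl⟩ | ⟨y, hy, rfl⟩)
    · have ht : (esTensor E1 E2).Config (tagL '' x) := by
        have := tensor_config_iff.mpr ⟨x, ∅, hx, config_empty E2, rfl⟩
        simpa using this
      refine ⟨ht.1, ht.2.1, ?_⟩
      rintro u hu v hv (hc | ⟨e, he, f, hf, (⟨rfl, rfl⟩ | ⟨rfl, rfl⟩)⟩)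
      · exact ht.2.2 u hu v hv hc
      · obtain ⟨a, _, hEq⟩ := hv
        exact tagL_ne_tagR hEq
      · obtain ⟨a, _, hEq⟩ := hu
        exact tagL_ne_tagR hEq
    · have ht : (esTensor E1 E2).Config (tagR '' y) := by
        have := tensor_config_iff.mpr ⟨∅, y, config_empty E1, hy, rfl⟩
        simpa using this
      refine ⟨ht.1, ht.2.1, ?_⟩
      rintro u hu v hv (hc | ⟨e, he, f, hf, (⟨rfl, rfl⟩ | ⟨rfl, rfl⟩)⟩)
      · exact ht.2.2 u hu v hv hc
      · obtain ⟨a, _, hEq⟩ := hu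
        exact tagL_ne_tagR hEq.symm
      · obtain ⟨a, _, hEq⟩ := hv
        exact tagL_ne_tagR hEq.symm

lemma sum_maxC_iff {Γ1 Γ2 : Set P} (h1 : Inv Γ1 E1) (h2 : Inv Γ2 E2)
    (hne1 : E1.ev.Nonempty) (hne2 : E2.ev.Nonempty) {z : Set ℕ} :
    z ∈ (esSum E1 E2).MaxC ↔
      (∃ x ∈ E1.MaxC, z = tagL '' x) ∨ ∃ y ∈ E2.MaxC, z = tagR '' y := by
  constructor
  · rintro ⟨hcfg, hmax⟩
    rcases sum_config_iff.mp hcfg with ⟨x, hx, rfl⟩ | ⟨y, hy, rfl⟩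
    · refine Or.inl ⟨x, ⟨hx, ?_⟩, rfl⟩
      intro x' hx' hsub
      have := hmax (tagL '' x') (sum_config_iff.mpr (Or.inl ⟨x', hx', rfl⟩))
        (Set.image_mono hsub)
      exact (Set.image_injective.mpr tagL_injective) this
    · refine Or.inr ⟨y, ⟨hy, ?_⟩, rfl⟩
      intro y' hy' hsub
      have := hmax (tagR '' y') (sum_config_iff.mpr (Or.inr ⟨y', hy', rfl⟩))
        (Set.image_mono hsub)
      exact (Set.image_injective.mpr tagR_injective) this
  · rintro (⟨x, hx, rfl⟩ | ⟨y, hy, rfl⟩)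
    · refine ⟨sum_config_iff.mpr (Or.inl ⟨x, hx.1, rfl⟩), ?_⟩
      intro w hw hsub
      rcases sum_config_iff.mp hw with ⟨x', hx', rfl⟩ | ⟨y', hy', rfl⟩
      · have hxx : x ⊆ x' := by
          intro e he
          obtain ⟨a, ha, hEq⟩ := hsub ⟨e, he, rfl⟩
          rwa [← tagL_injective hEq]
        rw [hx.2 x' hx' hxx]
      · exfalso
        obtain ⟨e, he⟩ := h1.maxc_nonempty hne1 hx
        obtain ⟨a, _, hEq⟩ := hsub ⟨e, he, rfl⟩
        exact tagL_ne_tagR hEq.symm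
    · refine ⟨sum_config_iff.mpr (Or.inr ⟨y, hy.1, rfl⟩), ?_⟩
      intro w hw hsub
      rcases sum_config_iff.mp hw with ⟨x', hx', rfl⟩ | ⟨y', hy', rfl⟩
      · exfalso
        obtain ⟨e, he⟩ := h2.maxc_nonempty hne2 hy
        obtain ⟨a, _, hEq⟩ := hsub ⟨e, he, rfl⟩
        exact tagL_ne_tagR hEq
      · have hyy : y ⊆ y' := by
          intro e he
          obtain ⟨a, ha, hEq⟩ := hsub ⟨e, he, rfl⟩
          rwa [← tagR_injective hEq]
        rw [hy.2 y' hy' hyy]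

lemma inv_sum {Γ : Set P} (h1 : Inv Γ E1) (h2 : Inv Γ E2)
    (hne1 : E1.ev.Nonempty) (hne2 : E2.ev.Nonempty) :
    Inv Γ (esSum E1 E2) where
  fin := (h1.fin.image tagL).union (h2.fin.image tagR)
  conf_symm := by
    rintro u v (hc | ⟨e, he, f, hf, (⟨rfl, rfl⟩ | ⟨rfl, rfl⟩)⟩)
    · exact Or.inl ((inv_tensor h1 h2).conf_symm hc)
    · exact Or.inr ⟨e, he, f, hf, Or.inr ⟨rfl, rfl⟩⟩
    · exact Or.inr ⟨e, he, f, hf, Or.inl ⟨rfl, rfl⟩⟩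
  sbj_mem := by
    intro e he
    have := (inv_tensor h1 h2).sbj_mem e he
    rw [Set.union_self] at this
    exact this
  part_ev := by
    intro A hA
    obtain ⟨e, he, hs⟩ := h1.part_ev A hA
    exact ⟨tagL e, mem_tensor_ev.mpr (Or.inl ⟨e, he, rfl⟩), by
      show ((esTensor E1 E2).lbl _).sbj = A
      rw [tensor_lbl_L]; exact hs⟩
  ev_maxc := by
    intro u hu
    rcases mem_tensor_ev.mp hu with ⟨a, ha, rfl⟩ | ⟨b, hb, rfl⟩
    · obtain ⟨x, hx, hax⟩ := h1.ev_maxc a ha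
      exact ⟨_, (sum_maxC_iff h1 h2 hne1 hne2).mpr (Or.inl ⟨x, hx, rfl⟩), ⟨a, hax, rfl⟩⟩
    · obtain ⟨y, hy, hby⟩ := h2.ev_maxc b hb
      exact ⟨_, (sum_maxC_iff h1 h2 hne1 hne2).mpr (Or.inr ⟨y, hy, rfl⟩), ⟨b, hby, rfl⟩⟩
  maxc_ne := by
    obtain ⟨x, hx⟩ := h1.maxc_ne
    exact ⟨_, (sum_maxC_iff h1 h2 hne1 hne2).mpr (Or.inl ⟨x, hx, rfl⟩)⟩
  maxc_part := by
    intro z hz A hA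
    rcases (sum_maxC_iff h1 h2 hne1 hne2).mp hz with ⟨x, hx, rfl⟩ | ⟨y, hy, rfl⟩
    · obtain ⟨e, he, hs⟩ := h1.maxc_part x hx A hA
      exact ⟨tagL e, ⟨e, he, rfl⟩, by
        show ((esTensor E1 E2).lbl _).sbj = A
        rw [tensor_lbl_L]; exact hs⟩
    · obtain ⟨e, he, hs⟩ := h2.maxc_part y hy A hA
      exact ⟨tagR e, ⟨e, he, rfl⟩, by
        show ((esTensor E1 E2).lbl _).sbj = A
        rw [tensor_lbl_R]; exact hs⟩

end SumAux
section SeqAux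

variable {P M : Type} {E1 E2 : ES P M}

lemma mem_seq_ev {u : ℕ} :
    u ∈ (esSeq E1 E2).ev ↔
      (∃ e ∈ E1.ev, u = tagL e) ∨ ∃ x ∈ E1.MaxC, ∃ f ∈ E2.ev, u = tagC (encSet x) f := by
  constructor
  · rintro (⟨e, he, rfl⟩ | ⟨x, hx, f, hf, rfl⟩)
    · exact Or.inl ⟨e, he, rfl⟩
    · exact Or.inr ⟨x, hx, f, hf, rfl⟩
  · rintro (⟨e, he, rfl⟩ | ⟨x, hx, f, hf, rfl⟩)
    · exact Or.inl ⟨e, he, rfl⟩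
    · exact Or.inr ⟨x, hx, f, hf, rfl⟩

lemma memL_of_pair {x y : Set ℕ} {k e : ℕ} (h : tagL e ∈ tagL '' x ∪ tagC k '' y) :
    e ∈ x := by
  rcases h with ⟨a, ha, hEq⟩ | ⟨a, ha, hEq⟩
  · rwa [tagL_injective hEq] at ha
  · exact (tagL_ne_tagC hEq.symm).elim

lemma memC_of_pair {x y : Set ℕ} {k k' f : ℕ} (h : tagC k' f ∈ tagL '' x ∪ tagC k '' y) :
    k' = k ∧ f ∈ y := by
  rcases h with ⟨a, ha, hEq⟩ | ⟨a, ha, hEq⟩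
  · exact (tagL_ne_tagC hEq).elim
  · obtain ⟨hk, hf⟩ := tagC_inj hEq
    exact ⟨hk.symm, hf ▸ ha⟩

lemma seq_config_L {x : Set ℕ} (hx : E1.Config x) : (esSeq E1 E2).Config (tagL '' x) := by
  refine ⟨?_, ?_, ?_⟩
  · rintro u ⟨e, he, rfl⟩
    exact Or.inl ⟨e, hx.1 he, rfl⟩
  · rintro v ⟨b, hb, rfl⟩ u hu hle
    rcases hle with ⟨a, ha, b', hb', hab, rfl, hEq⟩ |
      (⟨x', hx', e, he, f, hf, hle2, rfl, hEq⟩ | ⟨x', hx', e, he, f, hf, hsbj, rfl, hEq⟩)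
    · cases tagL_injective hEq
      exact ⟨a, hx.2.1 b hb a ha hab, rfl⟩
    · exact (tagL_ne_tagC hEq).elim
    · exact (tagL_ne_tagC hEq).elim
  · rintro u ⟨a, ha, rfl⟩ v ⟨b, hb, rfl⟩ hconf
    rcases hconf with ⟨a', ha', b', hb', hab, hEqa, hEqb⟩ |
      (⟨x', hx', e, he, f, hf, hc2, hEqa, hEqb⟩ |
       (⟨x', hx', x'', hx'', hne, e, he, f, hf, hEqa, hEqb⟩ |
        ⟨x', hx', e, he, ⟨e', he', hce⟩, f, hf, (⟨hEqa, hEqb⟩ | ⟨hEqa, hEqb⟩)⟩))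
    · cases tagL_injective hEqa
      cases tagL_injective hEqb
      exact hx.2.2 a ha b hb hab
    · exact (tagL_ne_tagC hEqa).elim
    · exact (tagL_ne_tagC hEqa).elim
    · exact (tagL_ne_tagC hEqb).elim
    · exact (tagL_ne_tagC hEqa).elim

lemma config_preL_seq {z : Set ℕ} (hz : (esSeq E1 E2).Config z) :
    E1.Config (tagL ⁻¹' z) := by
  have hsub : ∀ e : ℕ, tagL e ∈ z → e ∈ E1.ev := by
    intro e he
    rcases mem_seq_ev.mp (hz.1 he) with ⟨a, ha, hEq⟩ | ⟨x, hx, f, hf, hEq⟩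
    · rwa [tagL_injective hEq]
    · exact (tagL_ne_tagC hEq).elim
  refine ⟨fun e he => hsub e he, ?_, ?_⟩
  · intro e he f hf hle
    exact hz.2.1 (tagL e) he (tagL f) (Or.inl ⟨f, hf, rfl⟩)
      (Or.inl ⟨f, hf, e, hsub e he, hle, rfl, rfl⟩)
  · intro e he f hf hc
    exact hz.2.2 (tagL e) he (tagL f) hf
      (Or.inl ⟨e, hsub e he, f, hsub f hf, hc, rfl, rfl⟩)

lemma config_preC_seq {z x₀ : Set ℕ} (hz : (esSeq E1 E2).Config z) (hx₀ : x₀ ∈ E1.MaxC) :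
    E2.Config (tagC (encSet x₀) ⁻¹' z) := by
  have hsub : ∀ f : ℕ, tagC (encSet x₀) f ∈ z → f ∈ E2.ev := by
    intro f hf
    rcases mem_seq_ev.mp (hz.1 hf) with ⟨a, ha, hEq⟩ | ⟨x, hx, g, hg, hEq⟩
    · exact (tagL_ne_tagC hEq.symm).elim
    · obtain ⟨-, hfg⟩ := tagC_inj hEq
      exact hfg ▸ hg
  refine ⟨fun f hf => hsub f hf, ?_, ?_⟩
  · intro f hf g hg hle
    exact hz.2.1 _ hf _ (Or.inr ⟨x₀, hx₀, g, hg, rfl⟩)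
      (Or.inr (Or.inl ⟨x₀, hx₀, g, hg, f, hsub f hf, hle, rfl, rfl⟩))
  · intro f hf g hg hc
    exact hz.2.2 _ hf _ hg
      (Or.inr (Or.inl ⟨x₀, hx₀, f, hsub f hf, g, hsub g hg, hc, rfl, rfl⟩))

lemma seq_copy_same {z : Set ℕ} (hz : (esSeq E1 E2).Config z) {k f k' f' : ℕ}
    (h : tagC k f ∈ z) (h' : tagC k' f' ∈ z) : k = k' := by
  rcases mem_seq_ev.mp (hz.1 h) with ⟨a, ha, hEq⟩ | ⟨x, hx, g, hg, hEq⟩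
  · exact (tagL_ne_tagC hEq.symm).elim
  obtain ⟨hk, hfg⟩ := tagC_inj hEq
  rcases mem_seq_ev.mp (hz.1 h') with ⟨a, ha, hEq'⟩ | ⟨x', hx', g', hg', hEq'⟩
  · exact (tagL_ne_tagC hEq'.symm).elim
  obtain ⟨hk', hfg'⟩ := tagC_inj hEq'
  by_cases hxx : x = x'
  · rw [hk, hk', hxx]
  · exfalso
    refine hz.2.2 _ h _ h' ?_
    refine Or.inr (Or.inr (Or.inl ⟨x, hx, x', hx', hxx, g, hg, g', hg', ?_, ?_⟩))
    · rw [hk, hfg]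
    · rw [hk', hfg']

lemma seq_config_pair (hfin1 : E1.ev.Finite) {x y : Set ℕ}
    (hx : x ∈ E1.MaxC) (hy : E2.Config y) :
    (esSeq E1 E2).Config (tagL '' x ∪ tagC (encSet x) '' y) := by
  have hxcf : E1.Config x := hx.1
  have hinj : ∀ x' ∈ E1.MaxC, encSet x' = encSet x → x' = x := by
    intro x' hx' hEq
    exact encSet_inj (hfin1.subset (maxC_subset hx')) (hfin1.subset (maxC_subset hx)) hEq
  refine ⟨?_, ?_, ?_⟩
  · rintro u (⟨e, he, rfl⟩ | ⟨f, hf, rfl⟩)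
    · exact Or.inl ⟨e, hxcf.1 he, rfl⟩
    · exact Or.inr ⟨x, hx, f, hy.1 hf, rfl⟩
  · rintro v hv u hu hle
    rcases hle with ⟨a, ha, b, hb, hab, rfl, rfl⟩ |
      (⟨x', hx', e, he, f, hf, hle2, rfl, rfl⟩ | ⟨x', hx', e, he, f, hf, hsbj, rfl, rfl⟩)
    · have hbx : b ∈ x := memL_of_pair hv
      exact Or.inl ⟨a, hxcf.2.1 b hbx a ha hab, rfl⟩
    · obtain ⟨hk, hfy⟩ := memC_of_pair hv
      refine Or.inr ⟨e, hy.2.1 f hfy e he hle2, ?_⟩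
      rw [← hk]
    · obtain ⟨hk, hfy⟩ := memC_of_pair hv
      have := hinj x' hx' hk
      subst this
      exact Or.inl ⟨e, he, rfl⟩
  · rintro u hu v hv hconf
    rcases hconf with ⟨a, ha, b, hb, hab, rfl, rfl⟩ |
      (⟨x', hx', e, he, f, hf, hc2, rfl, rfl⟩ |
       (⟨x', hx', x'', hx'', hne, e, he, f, hf, rfl, rfl⟩ |
        ⟨x', hx', e, he, ⟨e', he', hce⟩, f, hf, (⟨rfl, rfl⟩ | ⟨rfl, rfl⟩)⟩))
    · exact hxcf.2.2 a (memL_of_pair hu) b (memL_of_pair hv) hab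
    · obtain ⟨hk, hey⟩ := memC_of_pair hu
      obtain ⟨-, hfy⟩ := memC_of_pair hv
      exact hy.2.2 e hey f hfy hc2
    · obtain ⟨hk, -⟩ := memC_of_pair hu
      obtain ⟨hk', -⟩ := memC_of_pair hv
      exact hne (by rw [hinj x' hx' hk, hinj x'' hx'' hk'])
    · obtain ⟨hk, -⟩ := memC_of_pair hv
      have := hinj x' hx' hk
      subst this
      exact hxcf.2.2 e (memL_of_pair hu) e' he' hce
    · obtain ⟨hk, -⟩ := memC_of_pair hu
      have := hinj x' hx' hk
      subst this
      exact hxcf.2.2 e (memL_of_pair hv) e' he' hce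

end SeqAux
section SeqMaxC

variable {P M : Type} {E1 E2 : ES P M}

lemma seq_maxC_iff {Γ1 Γ2 : Set P} (h1 : Inv Γ1 E1) (h2 : Inv Γ2 E2) {z : Set ℕ} :
    z ∈ (esSeq E1 E2).MaxC ↔
      ∃ x ∈ E1.MaxC, ∃ y ∈ E2.MaxC, z = tagL '' x ∪ tagC (encSet x) '' y := by
  constructor
  · rintro ⟨hcfg, hmax⟩
    by_cases hcopy : ∃ x₀ ∈ E1.MaxC, ∃ f₀ ∈ E2.ev, tagC (encSet x₀) f₀ ∈ z
    · obtain ⟨x₀, hx₀, f₀, hf₀, hf₀z⟩ := hcopy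
      -- Step 1 : tagL '' x₀ ⊆ z
      have hstep1 : tagL '' x₀ ⊆ z := by
        have hwcfg : (esSeq E1 E2).Config (z ∪ tagL '' x₀) := by
          refine ⟨?_, ?_, ?_⟩
          · rintro u (hu | ⟨e, he, rfl⟩)
            · exact hcfg.1 hu
            · exact Or.inl ⟨e, maxC_subset hx₀ he, rfl⟩
          · rintro v hv u hu hle
            rcases hv with hv | ⟨b, hb, rfl⟩
            · exact Or.inl (hcfg.2.1 v hv u hu hle)
            · rcases hle with ⟨a, ha, b', hb', hab, rfl, hEq⟩ |
                (⟨x', hx', e, he, f, hf, hle2, rfl, hEq⟩ |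
                 ⟨x', hx', e, he, f, hf, hsbj, rfl, hEq⟩)
              · cases tagL_injective hEq
                exact Or.inr ⟨a, hx₀.1.2.1 b hb a ha hab, rfl⟩
              · exact (tagL_ne_tagC hEq).elim
              · exact (tagL_ne_tagC hEq).elim
          · rintro u hu v hv hconf
            rcases hconf with ⟨a, ha, b, hb, hab, rfl, rfl⟩ |
              (⟨x', hx', e, he, f, hf, hc2, rfl, rfl⟩ |
               (⟨x', hx', x'', hx'', hne, e, he, f, hf, rfl, rfl⟩ |
                ⟨x', hx', e, he, ⟨e', he', hce⟩, f, hf, (⟨rfl, rfl⟩ | ⟨rfl, rfl⟩)⟩))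
            · have hu' : tagL a ∈ z ∨ a ∈ x₀ := by
                rcases hu with hu | ⟨c, hc, hEq⟩
                · exact Or.inl hu
                · exact Or.inr (by rwa [tagL_injective hEq] at hc)
              have hv' : tagL b ∈ z ∨ b ∈ x₀ := by
                rcases hv with hv | ⟨c, hc, hEq⟩
                · exact Or.inl hv
                · exact Or.inr (by rwa [tagL_injective hEq] at hc)
              rcases hu' with huz | hax₀
              · rcases hv' with hvz | hbx₀
                · exact hcfg.2.2 _ huz _ hvz (Or.inl ⟨a, ha, b, hb, hab, rfl, rfl⟩)
                · exact hcfg.2.2 _ huz _ hf₀z (Or.inr (Or.inr (Or.inr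
                    ⟨x₀, hx₀, a, ha, ⟨b, hbx₀, hab⟩, f₀, hf₀, Or.inl ⟨rfl, rfl⟩⟩)))
              · rcases hv' with hvz | hbx₀
                · exact hcfg.2.2 _ hvz _ hf₀z (Or.inr (Or.inr (Or.inr
                    ⟨x₀, hx₀, b, hb, ⟨a, hax₀, h1.conf_symm hab⟩, f₀, hf₀,
                      Or.inl ⟨rfl, rfl⟩⟩)))
                · exact hx₀.1.2.2 a hax₀ b hbx₀ hab
            · have huz : tagC (encSet x') e ∈ z := by
                rcases hu with hu | ⟨c, hc, hEq⟩
                · exact hu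
                · exact (tagL_ne_tagC hEq).elim
              have hvz : tagC (encSet x') f ∈ z := by
                rcases hv with hv | ⟨c, hc, hEq⟩
                · exact hv
                · exact (tagL_ne_tagC hEq).elim
              exact hcfg.2.2 _ huz _ hvz (Or.inr (Or.inl ⟨x', hx', e, he, f, hf, hc2, rfl, rfl⟩))
            · have huz : tagC (encSet x') e ∈ z := by
                rcases hu with hu | ⟨c, hc, hEq⟩
                · exact hu
                · exact (tagL_ne_tagC hEq).elim
              have hvz : tagC (encSet x'') f ∈ z := by
                rcases hv with hv | ⟨c, hc, hEq⟩
                · exact hv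
                · exact (tagL_ne_tagC hEq).elim
              exact hcfg.2.2 _ huz _ hvz (Or.inr (Or.inr (Or.inl
                ⟨x', hx', x'', hx'', hne, e, he, f, hf, rfl, rfl⟩)))
            · -- u = tagL e, v = tagC (encSet x') f
              have hvz : tagC (encSet x') f ∈ z := by
                rcases hv with hv | ⟨c, hc, hEq⟩
                · exact hv
                · exact (tagL_ne_tagC hEq).elim
              have hk : encSet x' = encSet x₀ := seq_copy_same hcfg hvz hf₀z
              have hxx : x' = x₀ := h1.encSet_maxc_inj hx' hx₀ hk
              subst hxx
              rcases hu with huz | ⟨c, hc, hEq⟩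
              · exact hcfg.2.2 _ huz _ hvz (Or.inr (Or.inr (Or.inr
                  ⟨x', hx', e, he, ⟨e', he', hce⟩, f, hf, Or.inl ⟨rfl, rfl⟩⟩)))
              · have hex₀ : e ∈ x' := by rwa [tagL_injective hEq] at hc
                exact hx'.1.2.2 e hex₀ e' he' hce
            · -- u = tagC (encSet x') f, v = tagL e
              have huz : tagC (encSet x') f ∈ z := by
                rcases hu with hu | ⟨c, hc, hEq⟩
                · exact hu
                · exact (tagL_ne_tagC hEq).elim
              have hk : encSet x' = encSet x₀ := seq_copy_same hcfg huz hf₀z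
              have hxx : x' = x₀ := h1.encSet_maxc_inj hx' hx₀ hk
              subst hxx
              rcases hv with hvz | ⟨c, hc, hEq⟩
              · exact hcfg.2.2 _ huz _ hvz (Or.inr (Or.inr (Or.inr
                  ⟨x', hx', e, he, ⟨e', he', hce⟩, f, hf, Or.inr ⟨rfl, rfl⟩⟩)))
              · have hex₀ : e ∈ x' := by rwa [tagL_injective hEq] at hc
                exact hx'.1.2.2 e hex₀ e' he' hce
        have hEqw := hmax _ hwcfg Set.subset_union_left
        intro u hu
        rw [← hEqw]
        exact Or.inr hu
      -- Step 2 : the left part of z is exactly x₀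
      have hx1 : tagL ⁻¹' z = x₀ :=
        hx₀.2 _ (config_preL_seq hcfg) (fun a ha => hstep1 ⟨a, ha, rfl⟩)
      -- Step 3 : the copy part of z is a maximal configuration of E2
      have hYcfg : E2.Config (tagC (encSet x₀) ⁻¹' z) := config_preC_seq hcfg hx₀
      have hYmax : tagC (encSet x₀) ⁻¹' z ∈ E2.MaxC := by
        refine ⟨hYcfg, ?_⟩
        intro y' hy' hsub'
        have hwcfg : (esSeq E1 E2).Config (z ∪ tagC (encSet x₀) '' y') := by
          have hidx : ∀ k f : ℕ, tagC k f ∈ z ∪ tagC (encSet x₀) '' y' → k = encSet x₀ := by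
            rintro k f (hin | ⟨a, ha, hEq⟩)
            · exact seq_copy_same hcfg hin hf₀z
            · exact (tagC_inj hEq.symm).1
          have hL : ∀ e : ℕ, tagL e ∈ z ∪ tagC (encSet x₀) '' y' → e ∈ x₀ := by
            rintro e (hin | ⟨a, ha, hEq⟩)
            · rwa [← hx1]
            · exact (tagL_ne_tagC hEq.symm).elim
          have hC : ∀ k f : ℕ, tagC k f ∈ z ∪ tagC (encSet x₀) '' y' → f ∈ y' := by
            rintro k f (hin | ⟨a, ha, hEq⟩)
            · have hk := seq_copy_same hcfg hin hf₀z
              rw [hk] at hin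
              exact hsub' hin
            · rw [← (tagC_inj hEq).2]
              exact ha
          refine ⟨?_, ?_, ?_⟩
          · rintro u (hu | ⟨f, hf, rfl⟩)
            · exact hcfg.1 hu
            · exact Or.inr ⟨x₀, hx₀, f, hy'.1 hf, rfl⟩
          · rintro v hv u hu hle
            rcases hv with hv | ⟨b, hb, rfl⟩
            · exact Or.inl (hcfg.2.1 v hv u hu hle)
            · rcases hle with ⟨a, ha, b', hb', hab, rfl, hEq⟩ |
                (⟨x', hx', e, he, f, hf, hle2, rfl, hEq⟩ |
                 ⟨x', hx', e, he, f, hf, hsbj, rfl, hEq⟩)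
              · exact (tagL_ne_tagC hEq.symm).elim
              · obtain ⟨hk, hfb⟩ := tagC_inj hEq
                subst hfb
                refine Or.inr ⟨e, hy'.2.1 b hb e he hle2, ?_⟩
                rw [hk]
              · obtain ⟨hk, -⟩ := tagC_inj hEq
                have hxx : x' = x₀ := h1.encSet_maxc_inj hx' hx₀ hk.symm
                subst hxx
                rw [← hx1] at he
                exact Or.inl he
          · rintro u hu v hv hconf
            rcases hconf with ⟨a, ha, b, hb, hab, rfl, rfl⟩ |
              (⟨x', hx', e, he, f, hf, hc2, rfl, rfl⟩ |
               (⟨x', hx', x'', hx'', hne, e, he, f, hf, rfl, rfl⟩ |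
                ⟨x', hx', e, he, ⟨e', he', hce⟩, f, hf, (⟨rfl, rfl⟩ | ⟨rfl, rfl⟩)⟩))
            · exact hx₀.1.2.2 a (hL a hu) b (hL b hv) hab
            · exact hy'.2.2 e (hC _ e hu) f (hC _ f hv) hc2
            · have h1' : x' = x₀ := h1.encSet_maxc_inj hx' hx₀ (hidx _ e hu)
              have h2' : x'' = x₀ := h1.encSet_maxc_inj hx'' hx₀ (hidx _ f hv)
              exact hne (h1'.trans h2'.symm)
            · have hxx : x' = x₀ := h1.encSet_maxc_inj hx' hx₀ (hidx _ f hv)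
              subst hxx
              exact hx'.1.2.2 e (hL e hu) e' he' hce
            · have hxx : x' = x₀ := h1.encSet_maxc_inj hx' hx₀ (hidx _ f hu)
              subst hxx
              exact hx'.1.2.2 e (hL e hv) e' he' hce
        have hEqw := hmax _ hwcfg Set.subset_union_left
        refine Set.Subset.antisymm (fun a ha => ?_) hsub'
        show tagC (encSet x₀) a ∈ z
        rw [← hEqw]
        exact Or.inr ⟨a, ha, rfl⟩
      refine ⟨x₀, hx₀, _, hYmax, ?_⟩
      apply Set.Subset.antisymm
      · intro u hu
        rcases mem_seq_ev.mp (hcfg.1 hu) with ⟨e, he, rfl⟩ | ⟨x', hx', f, hf, rfl⟩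
        · exact Or.inl ⟨e, by rwa [← hx1], rfl⟩
        · have hk : encSet x' = encSet x₀ := seq_copy_same hcfg hu hf₀z
          rw [hk] at hu
          exact Or.inr ⟨f, hu, by rw [hk]⟩
      · rintro u (⟨e, he, rfl⟩ | ⟨f, hf, rfl⟩)
        · exact hstep1 ⟨e, he, rfl⟩
        · exact hf
    · -- no copy events in z
      push_neg at hcopy
      have hzL : z = tagL '' (tagL ⁻¹' z) := by
        apply Set.Subset.antisymm
        · intro u hu
          rcases mem_seq_ev.mp (hcfg.1 hu) with ⟨e, he, rfl⟩ | ⟨x', hx', f, hf, rfl⟩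
          · exact ⟨e, hu, rfl⟩
          · exact (hcopy x' hx' f hf hu).elim
        · rintro u ⟨e, he, rfl⟩
          exact he
      have hx1max : tagL ⁻¹' z ∈ E1.MaxC := by
        refine ⟨config_preL_seq hcfg, ?_⟩
        intro x' hx' hsub'
        have hc : (esSeq E1 E2).Config (tagL '' x') := seq_config_L hx'
        have hzsub : z ⊆ tagL '' x' := by
          rw [hzL]
          exact Set.image_mono hsub'
        have hEqw := hmax _ hc hzsub
        refine Set.Subset.antisymm (fun a ha => ?_) hsub'
        show tagL a ∈ z
        rw [← hEqw]
        exact ⟨a, ha, rfl⟩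
      obtain ⟨y₀, hy₀⟩ := h2.maxc_ne
      have hwcfg := seq_config_pair (E2 := E2) h1.fin hx1max hy₀.1
      have hzsub : z ⊆ tagL '' (tagL ⁻¹' z) ∪ tagC (encSet (tagL ⁻¹' z)) '' y₀ := by
        nth_rewrite 1 [hzL]
        exact Set.subset_union_left
      have hEqw := hmax _ hwcfg hzsub
      have hy₀e : y₀ = ∅ := by
        rcases Set.eq_empty_or_nonempty y₀ with h | ⟨g, hg⟩
        · exact h
        exfalso
        have hmem : tagC (encSet (tagL ⁻¹' z)) g ∈
            tagL '' (tagL ⁻¹' z) ∪ tagC (encSet (tagL ⁻¹' z)) '' y₀ := Or.inr ⟨g, hg, rfl⟩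
        rw [hEqw] at hmem
        exact hcopy _ hx1max g (maxC_subset hy₀ hg) hmem
      refine ⟨_, hx1max, y₀, hy₀, ?_⟩
      rw [hy₀e, Set.image_empty, Set.union_empty, ← hzL]
  · rintro ⟨x, hx, y, hy, rfl⟩
    refine ⟨seq_config_pair h1.fin hx hy.1, ?_⟩
    intro w hw hsub
    apply Set.Subset.antisymm _ hsub
    intro u hu
    rcases mem_seq_ev.mp (hw.1 hu) with ⟨e, he, rfl⟩ | ⟨x', hx', f, hf, rfl⟩
    · have hpre : E1.Config (tagL ⁻¹' w) := config_preL_seq hw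
      have hxsub : x ⊆ tagL ⁻¹' w := fun a ha => hsub (Or.inl ⟨a, ha, rfl⟩)
      have hEq := hx.2 _ hpre hxsub
      have heX : e ∈ x := by
        rw [← hEq]
        exact hu
      exact Or.inl ⟨e, heX, rfl⟩
    · rcases Set.eq_empty_or_nonempty y with hye | ⟨g, hg⟩
      · exfalso
        have hne : E2.ev.Nonempty := ⟨f, hf⟩
        have := h2.maxc_nonempty hne hy
        rw [hye] at this
        exact Set.not_nonempty_empty this
      · have hzin : tagC (encSet x) g ∈ w := hsub (Or.inr ⟨g, hg, rfl⟩)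
        have hk : encSet x' = encSet x := seq_copy_same hw hu hzin
        rw [hk] at hu
        have hpre : E2.Config (tagC (encSet x) ⁻¹' w) := config_preC_seq hw hx
        have hysub : y ⊆ tagC (encSet x) ⁻¹' w := fun a ha => hsub (Or.inr ⟨a, ha, rfl⟩)
        have hEqy := hy.2 _ hpre hysub
        have hfY : f ∈ y := by
          rw [← hEqy]
          exact hu
        exact Or.inr ⟨f, hfY, by rw [hk]⟩

end SeqMaxC
section SeqInv

variable {P M : Type} {E1 E2 : ES P M}

lemma inv_seq {Γ1 Γ2 : Set P} (h1 : Inv Γ1 E1) (h2 : Inv Γ2 E2) :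
    Inv (Γ1 ∪ Γ2) (esSeq E1 E2) where
  fin := by
    have hMC : E1.MaxC.Finite :=
      Set.Finite.subset h1.fin.finite_subsets fun x hx => maxC_subset hx
    show ((tagL '' E1.ev) ∪ {u | ∃ x ∈ E1.MaxC, ∃ e ∈ E2.ev, u = tagC (encSet x) e}).Finite
    refine (h1.fin.image tagL).union (Set.Finite.subset
      (Set.Finite.image2 (fun x f => tagC (encSet x) f) hMC h2.fin) ?_)
    rintro u ⟨x, hx, f, hf, rfl⟩
    exact Set.mem_image2_of_mem hx hf
  conf_symm := by
    rintro u v (⟨a, ha, b, hb, hab, rfl, rfl⟩ |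
      (⟨x', hx', e, he, f, hf, hc2, rfl, rfl⟩ |
       (⟨x', hx', x'', hx'', hne, e, he, f, hf, rfl, rfl⟩ |
        ⟨x', hx', e, he, he', f, hf, (⟨rfl, rfl⟩ | ⟨rfl, rfl⟩)⟩)))
    · exact Or.inl ⟨b, hb, a, ha, h1.conf_symm hab, rfl, rfl⟩
    · exact Or.inr (Or.inl ⟨x', hx', f, hf, e, he, h2.conf_symm hc2, rfl, rfl⟩)
    · exact Or.inr (Or.inr (Or.inl ⟨x'', hx'', x', hx', hne.symm, f, hf, e, he, rfl, rfl⟩))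
    · exact Or.inr (Or.inr (Or.inr ⟨x', hx', e, he, he', f, hf, Or.inr ⟨rfl, rfl⟩⟩))
    · exact Or.inr (Or.inr (Or.inr ⟨x', hx', e, he, he', f, hf, Or.inl ⟨rfl, rfl⟩⟩))
  sbj_mem := by
    intro u hu
    rcases mem_seq_ev.mp hu with ⟨e, he, rfl⟩ | ⟨x, hx, f, hf, rfl⟩
    · rw [seq_lbl_L]; exact Or.inl (h1.sbj_mem e he)
    · rw [seq_lbl_C]; exact Or.inr (h2.sbj_mem f hf)
  part_ev := by
    rintro A (hA | hA)
    · obtain ⟨e, he, hs⟩ := h1.part_ev A hA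
      exact ⟨tagL e, mem_seq_ev.mpr (Or.inl ⟨e, he, rfl⟩), by rw [seq_lbl_L]; exact hs⟩
    · obtain ⟨x, hx⟩ := h1.maxc_ne
      obtain ⟨f, hf, hs⟩ := h2.part_ev A hA
      exact ⟨tagC (encSet x) f, mem_seq_ev.mpr (Or.inr ⟨x, hx, f, hf, rfl⟩),
        by rw [seq_lbl_C]; exact hs⟩
  ev_maxc := by
    intro u hu
    rcases mem_seq_ev.mp hu with ⟨e, he, rfl⟩ | ⟨x, hx, f, hf, rfl⟩
    · obtain ⟨x, hx, hex⟩ := h1.ev_maxc e he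
      obtain ⟨y, hy⟩ := h2.maxc_ne
      exact ⟨_, (seq_maxC_iff h1 h2).mpr ⟨x, hx, y, hy, rfl⟩, Or.inl ⟨e, hex, rfl⟩⟩
    · obtain ⟨y, hy, hfy⟩ := h2.ev_maxc f hf
      exact ⟨_, (seq_maxC_iff h1 h2).mpr ⟨x, hx, y, hy, rfl⟩, Or.inr ⟨f, hfy, rfl⟩⟩
  maxc_ne := by
    obtain ⟨x, hx⟩ := h1.maxc_ne
    obtain ⟨y, hy⟩ := h2.maxc_ne
    exact ⟨_, (seq_maxC_iff h1 h2).mpr ⟨x, hx, y, hy, rfl⟩⟩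
  maxc_part := by
    intro z hz A hA
    obtain ⟨x, hx, y, hy, rfl⟩ := (seq_maxC_iff h1 h2).mp hz
    rcases hA with hA | hA
    · obtain ⟨e, he, hs⟩ := h1.maxc_part x hx A hA
      exact ⟨tagL e, Or.inl ⟨e, he, rfl⟩, by rw [seq_lbl_L]; exact hs⟩
    · obtain ⟨f, hf, hs⟩ := h2.maxc_part y hy A hA
      exact ⟨tagC (encSet x) f, Or.inr ⟨f, hf, rfl⟩, by rw [seq_lbl_C]; exact hs⟩

lemma seq_proj_minLbl_left {Γ1 : Set P} (h1 : Inv Γ1 E1) {A : P} (hA : A ∈ Γ1) :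
    ((esSeq E1 E2).proj A).minLbl = (E1.proj A).minLbl := by
  ext l
  constructor
  · rintro ⟨u, ⟨⟨huev, husbj⟩, hmin⟩, rfl⟩
    rcases mem_seq_ev.mp huev with ⟨e, he, rfl⟩ | ⟨x, hx, f, hf, rfl⟩
    · have heA : (E1.lbl e).sbj = A := by rwa [seq_lbl_L] at husbj
      refine ⟨e, ⟨⟨he, heA⟩, ?_⟩, (seq_lbl_L E1 E2 e).symm⟩
      intro g hgp hgle
      have hgev : tagL g ∈ (esSeq E1 E2).ev := mem_seq_ev.mpr (Or.inl ⟨g, hgp.1, rfl⟩)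
      have hgs : ((esSeq E1 E2).lbl (tagL g)).sbj = A := by rw [seq_lbl_L]; exact hgp.2
      have := hmin (tagL g) ⟨hgev, hgs⟩
        ⟨Or.inl ⟨g, hgp.1, e, he, hgle.1, rfl, rfl⟩, ⟨hgev, hgs⟩, ⟨huev, husbj⟩⟩
      exact tagL_injective this
    · exfalso
      obtain ⟨e, hex, hesbj⟩ := h1.maxc_part x hx A hA
      have hmemL : tagL e ∈ (esSeq E1 E2).ev :=
        mem_seq_ev.mpr (Or.inl ⟨e, maxC_subset hx hex, rfl⟩)
      have hsbjL : ((esSeq E1 E2).lbl (tagL e)).sbj = A := by rw [seq_lbl_L]; exact hesbj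
      have hfA : (E2.lbl f).sbj = A := by rwa [seq_lbl_C] at husbj
      have := hmin (tagL e) ⟨hmemL, hsbjL⟩
        ⟨Or.inr (Or.inr ⟨x, hx, e, hex, f, hf, hesbj.trans hfA.symm, rfl, rfl⟩),
          ⟨hmemL, hsbjL⟩, ⟨huev, husbj⟩⟩
      exact tagL_ne_tagC this
  · rintro ⟨e, ⟨⟨he, heA⟩, hemin⟩, rfl⟩
    have hmem : tagL e ∈ (esSeq E1 E2).ev := mem_seq_ev.mpr (Or.inl ⟨e, he, rfl⟩)
    have hsbj : ((esSeq E1 E2).lbl (tagL e)).sbj = A := by rw [seq_lbl_L]; exact heA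
    refine ⟨tagL e, ⟨⟨hmem, hsbj⟩, ?_⟩, seq_lbl_L E1 E2 e⟩
    rintro v ⟨hvev, hvsbj⟩ ⟨hle, ⟨-, -⟩, -⟩
    rcases hle with ⟨a, ha, b, hb, hab, rfl, hEq⟩ |
      (⟨x', hx', e', he', f, hf, hle2, rfl, hEq⟩ | ⟨x', hx', e', he', f, hf, hsb, rfl, hEq⟩)
    · cases tagL_injective hEq
      have haA : (E1.lbl a).sbj = A := by rwa [seq_lbl_L] at hvsbj
      rw [hemin a ⟨ha, haA⟩ ⟨hab, ⟨ha, haA⟩, ⟨he, heA⟩⟩]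
    · exact (tagL_ne_tagC hEq).elim
    · exact (tagL_ne_tagC hEq).elim

lemma seq_proj_minLbl_right {Γ1 : Set P} (h1 : Inv Γ1 E1) {A : P} (hA : A ∉ Γ1) :
    ((esSeq E1 E2).proj A).minLbl = (E2.proj A).minLbl := by
  ext l
  constructor
  · rintro ⟨u, ⟨⟨huev, husbj⟩, hmin⟩, rfl⟩
    rcases mem_seq_ev.mp huev with ⟨e, he, rfl⟩ | ⟨x, hx, f, hf, rfl⟩
    · exfalso
      have heA : (E1.lbl e).sbj = A := by rwa [seq_lbl_L] at husbj
      exact hA (heA ▸ h1.sbj_mem e he)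
    · have hfA : (E2.lbl f).sbj = A := by rwa [seq_lbl_C] at husbj
      refine ⟨f, ⟨⟨hf, hfA⟩, ?_⟩, (seq_lbl_C E1 E2 _ f).symm⟩
      intro g hgp hgle
      have hgev : tagC (encSet x) g ∈ (esSeq E1 E2).ev :=
        mem_seq_ev.mpr (Or.inr ⟨x, hx, g, hgp.1, rfl⟩)
      have hgs : ((esSeq E1 E2).lbl (tagC (encSet x) g)).sbj = A := by
        rw [seq_lbl_C]; exact hgp.2
      have := hmin (tagC (encSet x) g) ⟨hgev, hgs⟩
        ⟨Or.inr (Or.inl ⟨x, hx, g, hgp.1, f, hf, hgle.1, rfl, rfl⟩),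
          ⟨hgev, hgs⟩, ⟨huev, husbj⟩⟩
      exact (tagC_inj this).2
  · rintro ⟨f, ⟨⟨hf, hfA⟩, hfmin⟩, rfl⟩
    obtain ⟨x, hx⟩ := h1.maxc_ne
    have hmem : tagC (encSet x) f ∈ (esSeq E1 E2).ev :=
      mem_seq_ev.mpr (Or.inr ⟨x, hx, f, hf, rfl⟩)
    have hsbj : ((esSeq E1 E2).lbl (tagC (encSet x) f)).sbj = A := by
      rw [seq_lbl_C]; exact hfA
    refine ⟨tagC (encSet x) f, ⟨⟨hmem, hsbj⟩, ?_⟩, seq_lbl_C E1 E2 _ f⟩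
    rintro v ⟨hvev, hvsbj⟩ ⟨hle, ⟨-, -⟩, -⟩
    rcases hle with ⟨a, ha, b, hb, hab, rfl, hEq⟩ |
      (⟨x', hx', e', he', f', hf', hle2, rfl, hEq⟩ |
       ⟨x', hx', e', he', f', hf', hsb, rfl, hEq⟩)
    · exact (tagL_ne_tagC hEq.symm).elim
    · obtain ⟨hk, hff⟩ := tagC_inj hEq
      subst hff
      have heA : (E2.lbl e').sbj = A := by rwa [seq_lbl_C] at hvsbj
      have := hfmin e' ⟨he', heA⟩ ⟨hle2, ⟨he', heA⟩, ⟨hf, hfA⟩⟩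
      rw [this, ← hk]
    · exfalso
      have heA : (E1.lbl e').sbj = A := by rwa [seq_lbl_L] at hvsbj
      exact hA (heA ▸ h1.sbj_mem e' (maxC_subset hx' he'))

lemma seq_proj_maxLbl_left {Γ2 : Set P} (h2 : Inv Γ2 E2) {A : P} (hA : A ∉ Γ2) :
    ((esSeq E1 E2).proj A).maxLbl = (E1.proj A).maxLbl := by
  ext l
  constructor
  · rintro ⟨u, ⟨⟨huev, husbj⟩, hmax⟩, rfl⟩
    rcases mem_seq_ev.mp huev with ⟨e, he, rfl⟩ | ⟨x, hx, f, hf, rfl⟩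
    · have heA : (E1.lbl e).sbj = A := by rwa [seq_lbl_L] at husbj
      refine ⟨e, ⟨⟨he, heA⟩, ?_⟩, (seq_lbl_L E1 E2 e).symm⟩
      intro g hgp hgle
      have hgev : tagL g ∈ (esSeq E1 E2).ev := mem_seq_ev.mpr (Or.inl ⟨g, hgp.1, rfl⟩)
      have hgs : ((esSeq E1 E2).lbl (tagL g)).sbj = A := by rw [seq_lbl_L]; exact hgp.2
      have := hmax (tagL g) ⟨hgev, hgs⟩
        ⟨Or.inl ⟨e, he, g, hgp.1, hgle.1, rfl, rfl⟩, ⟨huev, husbj⟩, ⟨hgev, hgs⟩⟩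
      exact tagL_injective this
    · exfalso
      have hfA : (E2.lbl f).sbj = A := by rwa [seq_lbl_C] at husbj
      exact hA (hfA ▸ h2.sbj_mem f hf)
  · rintro ⟨e, ⟨⟨he, heA⟩, hemax⟩, rfl⟩
    have hmem : tagL e ∈ (esSeq E1 E2).ev := mem_seq_ev.mpr (Or.inl ⟨e, he, rfl⟩)
    have hsbj : ((esSeq E1 E2).lbl (tagL e)).sbj = A := by rw [seq_lbl_L]; exact heA
    refine ⟨tagL e, ⟨⟨hmem, hsbj⟩, ?_⟩, seq_lbl_L E1 E2 e⟩
    rintro v ⟨hvev, hvsbj⟩ ⟨hle, -, ⟨-, -⟩⟩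
    rcases hle with ⟨a, ha, b, hb, hab, hEq, rfl⟩ |
      (⟨x', hx', e', he', f, hf, hle2, hEq, rfl⟩ | ⟨x', hx', e', he', f, hf, hsb, hEq, rfl⟩)
    · cases tagL_injective hEq
      have hbA : (E1.lbl b).sbj = A := by rwa [seq_lbl_L] at hvsbj
      rw [hemax b ⟨hb, hbA⟩ ⟨hab, ⟨he, heA⟩, ⟨hb, hbA⟩⟩]
    · exact (tagL_ne_tagC hEq).elim
    · exfalso
      have hfA : (E2.lbl f).sbj = A := by rwa [seq_lbl_C] at hvsbj
      exact hA (hfA ▸ h2.sbj_mem f hf)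

lemma seq_proj_maxLbl_right {Γ1 Γ2 : Set P} (h1 : Inv Γ1 E1) (h2 : Inv Γ2 E2)
    {A : P} (hA : A ∈ Γ2) :
    ((esSeq E1 E2).proj A).maxLbl = (E2.proj A).maxLbl := by
  ext l
  constructor
  · rintro ⟨u, ⟨⟨huev, husbj⟩, hmax⟩, rfl⟩
    rcases mem_seq_ev.mp huev with ⟨e, he, rfl⟩ | ⟨x, hx, f, hf, rfl⟩
    · exfalso
      have heA : (E1.lbl e).sbj = A := by rwa [seq_lbl_L] at husbj
      obtain ⟨x, hx, hex⟩ := h1.ev_maxc e he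
      obtain ⟨f, hf, hfA⟩ := h2.part_ev A hA
      have hmemC : tagC (encSet x) f ∈ (esSeq E1 E2).ev :=
        mem_seq_ev.mpr (Or.inr ⟨x, hx, f, hf, rfl⟩)
      have hsbjC : ((esSeq E1 E2).lbl (tagC (encSet x) f)).sbj = A := by
        rw [seq_lbl_C]; exact hfA
      have := hmax (tagC (encSet x) f) ⟨hmemC, hsbjC⟩
        ⟨Or.inr (Or.inr ⟨x, hx, e, hex, f, hf, heA.trans hfA.symm, rfl, rfl⟩),
          ⟨huev, husbj⟩, ⟨hmemC, hsbjC⟩⟩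
      exact tagL_ne_tagC this.symm
    · have hfA : (E2.lbl f).sbj = A := by rwa [seq_lbl_C] at husbj
      refine ⟨f, ⟨⟨hf, hfA⟩, ?_⟩, (seq_lbl_C E1 E2 _ f).symm⟩
      intro g hgp hgle
      have hgev : tagC (encSet x) g ∈ (esSeq E1 E2).ev :=
        mem_seq_ev.mpr (Or.inr ⟨x, hx, g, hgp.1, rfl⟩)
      have hgs : ((esSeq E1 E2).lbl (tagC (encSet x) g)).sbj = A := by
        rw [seq_lbl_C]; exact hgp.2
      have := hmax (tagC (encSet x) g) ⟨hgev, hgs⟩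
        ⟨Or.inr (Or.inl ⟨x, hx, f, hf, g, hgp.1, hgle.1, rfl, rfl⟩),
          ⟨huev, husbj⟩, ⟨hgev, hgs⟩⟩
      exact (tagC_inj this).2
  · rintro ⟨f, ⟨⟨hf, hfA⟩, hfmax⟩, rfl⟩
    obtain ⟨x, hx⟩ := h1.maxc_ne
    have hmem : tagC (encSet x) f ∈ (esSeq E1 E2).ev :=
      mem_seq_ev.mpr (Or.inr ⟨x, hx, f, hf, rfl⟩)
    have hsbj : ((esSeq E1 E2).lbl (tagC (encSet x) f)).sbj = A := by
      rw [seq_lbl_C]; exact hfA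
    refine ⟨tagC (encSet x) f, ⟨⟨hmem, hsbj⟩, ?_⟩, seq_lbl_C E1 E2 _ f⟩
    rintro v ⟨hvev, hvsbj⟩ ⟨hle, -, ⟨-, -⟩⟩
    rcases hle with ⟨a, ha, b, hb, hab, hEq, rfl⟩ |
      (⟨x', hx', e', he', g, hg, hle2, hEq, rfl⟩ | ⟨x', hx', e', he', g, hg, hsb, hEq, rfl⟩)
    · exact (tagL_ne_tagC hEq.symm).elim
    · obtain ⟨hk, hfe⟩ := tagC_inj hEq
      subst hfe
      have hgA : (E2.lbl g).sbj = A := by rwa [seq_lbl_C] at hvsbj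
      have := hfmax g ⟨hg, hgA⟩ ⟨hle2, ⟨hf, hfA⟩, ⟨hg, hgA⟩⟩
      rw [this, ← hk]
    · exact (tagL_ne_tagC hEq.symm).elim

end SeqInv
section SmallAux

variable {P M : Type}

lemma minIn_singleton (E : ES P M) (e : ℕ) : E.minIn {e} = {e} := by
  ext u
  constructor
  · exact fun h => h.1
  · rintro rfl
    exact ⟨rfl, fun f hf _ => hf⟩

lemma maxIn_singleton (E : ES P M) (e : ℕ) : E.maxIn {e} = {e} := by
  ext u
  constructor
  · exact fun h => h.1
  · rintro rfl
    exact ⟨rfl, fun f hf _ => hf⟩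

lemma proj_ev_empty' {E : ES P M} {A : P} (h : ∀ e ∈ E.ev, (E.lbl e).sbj ≠ A) :
    (E.proj A).ev = ∅ := by
  ext u
  simp only [Set.mem_empty_iff_false, iff_false]
  rintro ⟨hu, hsbj⟩
  exact h u hu hsbj

lemma minLbl_of_ev_empty {E : ES P M} (h : E.ev = ∅) : E.minLbl = ∅ := by
  have : E.minEv = ∅ := Set.subset_empty_iff.mp (h ▸ minIn_subset E E.ev)
  rw [ES.minLbl, this, Set.image_empty]

lemma maxLbl_of_ev_empty {E : ES P M} (h : E.ev = ∅) : E.maxLbl = ∅ := by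
  have : E.maxEv = ∅ := Set.subset_empty_iff.mp (h ▸ maxIn_subset E E.ev)
  rw [ES.maxLbl, this, Set.image_empty]

lemma act_lbl_zero {a b : P} {m : M} : (esAct a b m).lbl 0 = Label.out a b m := by
  simp [esAct]

lemma act_lbl_one {a b : P} {m : M} : (esAct a b m).lbl 1 = Label.inp a b m := by
  simp [esAct]

lemma act_proj_ev_a {a b : P} {m : M} (hab : a ≠ b) :
    ((esAct a b m).proj a).ev = {0} := by
  ext u
  constructor
  · rintro ⟨hu, hsbj⟩
    rcases hu with rfl | hu
    · rfl
    · rw [Set.mem_singleton_iff] at hu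
      subst hu
      rw [act_lbl_one] at hsbj
      exact absurd hsbj.symm hab
  · rintro rfl
    exact ⟨Or.inl rfl, by rw [act_lbl_zero]; rfl⟩

lemma act_proj_ev_b {a b : P} {m : M} (hab : a ≠ b) :
    ((esAct a b m).proj b).ev = {1} := by
  ext u
  constructor
  · rintro ⟨hu, hsbj⟩
    rcases hu with rfl | hu
    · rw [act_lbl_zero] at hsbj
      exact absurd hsbj hab
    · exact hu
  · rintro rfl
    exact ⟨Or.inr rfl, by rw [act_lbl_one]; rfl⟩

lemma act_proj_ev_other {a b A : P} {m : M} (hA : A ≠ a) (hB : A ≠ b) :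
    ((esAct a b m).proj A).ev = ∅ := by
  apply proj_ev_empty'
  intro e he
  rcases he with rfl | he
  · rw [act_lbl_zero]; exact fun h => hA h.symm
  · rw [Set.mem_singleton_iff] at he
    subst he
    rw [act_lbl_one]; exact fun h => hB h.symm

lemma act_maxC {a b : P} {m : M} {z : Set ℕ} :
    z ∈ (esAct a b m).MaxC ↔ z = {0, 1} := by
  have hcfg : (esAct a b m).Config {0, 1} :=
    ⟨le_refl _, fun e _ f hf _ => hf, fun _ _ _ _ h => h⟩
  constructor
  · rintro ⟨hz, hmax⟩
    exact (hmax _ hcfg hz.1).symm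
  · rintro rfl
    exact ⟨hcfg, fun y hy hsub => Set.Subset.antisymm hy.1 hsub⟩

lemma inv_act {a b : P} {m : M} (hab : a ≠ b) : Inv {a, b} (esAct a b m) where
  fin := (Set.finite_singleton 1).insert 0
  conf_symm := fun h => h.elim
  sbj_mem := by
    rintro e (rfl | he)
    · rw [act_lbl_zero]; exact Or.inl rfl
    · rw [Set.mem_singleton_iff] at he
      subst he
      rw [act_lbl_one]; exact Or.inr rfl
  part_ev := by
    rintro A (rfl | hA)
    · exact ⟨0, Or.inl rfl, by rw [act_lbl_zero]; rfl⟩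
    · rw [Set.mem_singleton_iff] at hA
      subst hA
      exact ⟨1, Or.inr rfl, by rw [act_lbl_one]; rfl⟩
  ev_maxc := fun e he => ⟨{0, 1}, act_maxC.mpr rfl, he⟩
  maxc_ne := ⟨{0, 1}, act_maxC.mpr rfl⟩
  maxc_part := by
    rintro z hz A (rfl | hA)
    · exact ⟨0, act_maxC.mp hz ▸ Or.inl rfl, by rw [act_lbl_zero]; rfl⟩
    · rw [Set.mem_singleton_iff] at hA
      subst hA
      exact ⟨1, act_maxC.mp hz ▸ Or.inr rfl, by rw [act_lbl_one]; rfl⟩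

lemma empty_maxC [Nonempty P] [Nonempty M] {z : Set ℕ} :
    z ∈ (esEmpty (P := P) (M := M)).MaxC ↔ z = ∅ := by
  constructor
  · rintro ⟨hz, hmax⟩
    exact Set.subset_empty_iff.mp hz.1
  · rintro rfl
    exact ⟨config_empty _, fun y hy _ => Set.subset_empty_iff.mp hy.1⟩

lemma inv_empty [Nonempty P] [Nonempty M] :
    Inv (∅ : Set P) (esEmpty (P := P) (M := M)) where
  fin := Set.finite_empty
  conf_symm := fun h => h.elim
  sbj_mem := fun e he => he.elim
  part_ev := fun A hA => hA.elim
  ev_maxc := fun e he => he.elim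
  maxc_ne := ⟨∅, empty_maxC.mpr rfl⟩
  maxc_part := fun z hz A hA => hA.elim

lemma hat_union {S T : Set (Label P M)} {A : P} :
    hat (S ∪ T) A = hat S A ∪ hat T A := by
  ext l
  simp only [hat, Set.mem_union, Set.mem_setOf_eq, Set.mem_sep_iff]
  tauto

lemma hat_lminus_of_mem {S : Set (Label P M)} {Γ : Set P} {A : P} (hA : A ∈ Γ) :
    hat (lminus S Γ) A = ∅ := by
  ext l
  simp only [hat, lminus, Set.mem_sep_iff, Set.mem_setOf_eq, Set.mem_empty_iff_false,
    iff_false]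
  rintro ⟨⟨-, hno⟩, hsbj⟩
  exact hno (hsbj ▸ hA)

lemma hat_lminus_of_not {S : Set (Label P M)} {Γ : Set P} {A : P} (hA : A ∉ Γ) :
    hat (lminus S Γ) A = hat S A := by
  ext l
  simp only [hat, lminus, Set.mem_sep_iff, Set.mem_setOf_eq]
  constructor
  · rintro ⟨⟨hl, -⟩, hsbj⟩
    exact ⟨hl, hsbj⟩
  · rintro ⟨hl, hsbj⟩
    exact ⟨⟨hl, hsbj ▸ hA⟩, hsbj⟩

lemma hat_eq_empty {S : Set (Label P M)} {Γ : Set P} {A : P}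
    (h : sbjSet S ⊆ Γ) (hA : A ∉ Γ) : hat S A = ∅ := by
  ext l
  simp only [hat, Set.mem_sep_iff, Set.mem_empty_iff_false, iff_false]
  rintro ⟨hl, hsbj⟩
  exact hA (hsbj ▸ h ⟨l, hl, rfl⟩)

lemma sbjSet_union {S T : Set (Label P M)} :
    sbjSet (S ∪ T) = sbjSet S ∪ sbjSet T := Set.image_union _ _ _

lemma sbjSet_lminus_subset {S : Set (Label P M)} {Γ : Set P} :
    sbjSet (lminus S Γ) ⊆ sbjSet S :=
  Set.image_mono fun l hl => hl.1

end SmallAux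
section MainProof

variable {P M : Type}

theorem sound_aux [Nonempty P] [Nonempty M] {Γ : Set P} {G : GC P M}
    {φ Λ : Set (Label P M)} (h : Typing Γ G φ Λ) :
    ∃ E : ES P M, gsem G = some E ∧ Γ = parts G ∧ Inv Γ E ∧
      sbjSet φ ⊆ Γ ∧ sbjSet Λ ⊆ Γ ∧
      ∀ A, hat φ A = (E.proj A).minLbl ∧ hat Λ A = (E.proj A).maxLbl := by
  induction h with
  | temp =>
      refine ⟨esEmpty, by simp [gsem], rfl, inv_empty, by simp [sbjSet],
        by simp [sbjSet], fun A => ?_⟩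
      have hev : ((esEmpty (P := P) (M := M)).proj A).ev = ∅ :=
        proj_ev_empty' fun e he => he.elim
      constructor
      · rw [minLbl_of_ev_empty hev]
        ext l
        simp [hat]
      · rw [maxLbl_of_ev_empty hev]
        ext l
        simp [hat]
  | @tint a b m hab =>
      have hsubj : sbjSet {Label.out a b m, Label.inp a b m} ⊆ ({a, b} : Set P) := by
        rintro p ⟨l, hl, rfl⟩
        rcases hl with rfl | hl
        · exact Or.inl rfl
        · rw [Set.mem_singleton_iff] at hl
          subst hl
          exact Or.inr rfl
      have hata : hat {Label.out a b m, Label.inp a b m} a = {Label.out a b m} := by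
        ext l
        constructor
        · rintro ⟨rfl | hl, hsbj⟩
          · rfl
          · rw [Set.mem_singleton_iff] at hl
            subst hl
            exact absurd hsbj.symm hab
        · rintro rfl
          exact ⟨Or.inl rfl, rfl⟩
      have hatb : hat {Label.out a b m, Label.inp a b m} b = {Label.inp a b m} := by
        ext l
        constructor
        · rintro ⟨rfl | hl, hsbj⟩
          · exact absurd hsbj hab
          · exact hl
        · rintro rfl
          exact ⟨Or.inr rfl, rfl⟩
      have hmina : ((esAct a b m).proj a).minLbl = {Label.out a b m} := by
        rw [ES.minLbl, ES.minEv, act_proj_ev_a hab, minIn_singleton, Set.image_singleton]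
        show ({(esAct a b m).lbl 0} : Set _) = _
        rw [act_lbl_zero]
      have hmaxa : ((esAct a b m).proj a).maxLbl = {Label.out a b m} := by
        rw [ES.maxLbl, ES.maxEv, act_proj_ev_a hab, maxIn_singleton, Set.image_singleton]
        show ({(esAct a b m).lbl 0} : Set _) = _
        rw [act_lbl_zero]
      have hminb : ((esAct a b m).proj b).minLbl = {Label.inp a b m} := by
        rw [ES.minLbl, ES.minEv, act_proj_ev_b hab, minIn_singleton, Set.image_singleton]
        show ({(esAct a b m).lbl 1} : Set _) = _
        rw [act_lbl_one]
      have hmaxb : ((esAct a b m).proj b).maxLbl = {Label.inp a b m} := by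
        rw [ES.maxLbl, ES.maxEv, act_proj_ev_b hab, maxIn_singleton, Set.image_singleton]
        show ({(esAct a b m).lbl 1} : Set _) = _
        rw [act_lbl_one]
      refine ⟨esAct a b m, by simp [gsem, hab], rfl, inv_act hab, hsubj, hsubj, fun A => ?_⟩
      by_cases hAa : A = a
      · subst hAa
        rw [hata, hmina, hmaxa]
        exact ⟨rfl, rfl⟩
      by_cases hAb : A = b
      · subst hAb
        rw [hatb, hminb, hmaxb]
        exact ⟨rfl, rfl⟩
      have hev : ((esAct a b m).proj A).ev = ∅ := act_proj_ev_other hAa hAb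
      have hhat : hat {Label.out a b m, Label.inp a b m} A = ∅ := by
        ext l
        simp only [hat, Set.mem_sep_iff, Set.mem_empty_iff_false, iff_false]
        rintro ⟨rfl | hl, hsbj⟩
        · exact hAa hsbj.symm
        · rw [Set.mem_singleton_iff] at hl
          subst hl
          exact hAb hsbj.symm
      rw [hhat, minLbl_of_ev_empty hev, maxLbl_of_ev_empty hev]
      exact ⟨rfl, rfl⟩
  | @tseq Γ1 Γ2 g1 g2 φ1 φ2 Λ1 Λ2 h1 h2 ih1 ih2 =>
      obtain ⟨E1, hE1, hP1, hI1, hs1, hsl1, hA1⟩ := ih1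
      obtain ⟨E2, hE2, hP2, hI2, hs2, hsl2, hA2⟩ := ih2
      refine ⟨esSeq E1 E2, by simp [gsem, hE1, hE2], by simp only [parts]; rw [hP1, hP2],
        inv_seq hI1 hI2, ?_, ?_, fun A => ⟨?_, ?_⟩⟩
      · rw [sbjSet_union]
        exact Set.union_subset (hs1.trans Set.subset_union_left)
          ((sbjSet_lminus_subset.trans hs2).trans Set.subset_union_right)
      · rw [sbjSet_union]
        exact Set.union_subset (hsl2.trans Set.subset_union_right)
          ((sbjSet_lminus_subset.trans hsl1).trans Set.subset_union_left)
      · rw [hat_union]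
        by_cases hA : A ∈ Γ1
        · rw [hat_lminus_of_mem hA, Set.union_empty, (hA1 A).1,
            seq_proj_minLbl_left hI1 hA]
        · rw [hat_lminus_of_not hA, hat_eq_empty hs1 hA, Set.empty_union, (hA2 A).1,
            seq_proj_minLbl_right hI1 hA]
      · rw [hat_union]
        by_cases hA : A ∈ Γ2
        · rw [hat_lminus_of_mem hA, Set.union_empty, (hA2 A).2,
            seq_proj_maxLbl_right hI1 hI2 hA]
        · rw [hat_lminus_of_not hA, hat_eq_empty hsl2 hA, Set.empty_union, (hA1 A).2,
            seq_proj_maxLbl_left hI2 hA]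
  | @tpar Γ1 Γ2 g1 g2 φ1 φ2 Λ1 Λ2 h1 h2 hdisj ih1 ih2 =>
      obtain ⟨E1, hE1, hP1, hI1, hs1, hsl1, hA1⟩ := ih1
      obtain ⟨E2, hE2, hP2, hI2, hs2, hsl2, hA2⟩ := ih2
      have hld : Disjoint E1.lblSet E2.lblSet := by
        rw [Set.disjoint_left]
        rintro l ⟨e, he, rfl⟩ ⟨f, hf, hEq⟩
        have hm1 : (E1.lbl e).sbj ∈ Γ1 := hI1.sbj_mem e he
        have hm2 : (E1.lbl e).sbj ∈ Γ2 := by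
          have := hI2.sbj_mem f hf
          rwa [hEq] at this
        have : (E1.lbl e).sbj ∈ Γ1 ∩ Γ2 := ⟨hm1, hm2⟩
        rw [hdisj] at this
        exact this
      refine ⟨esTensor E1 E2, ?_, by simp only [parts]; rw [hP1, hP2],
        inv_tensor hI1 hI2, ?_, ?_, fun A => ⟨?_, ?_⟩⟩
      · simp only [gsem]
        rw [hE1, hE2]
        simp only [if_pos hld]
      · rw [sbjSet_union]
        exact Set.union_subset (hs1.trans Set.subset_union_left)
          (hs2.trans Set.subset_union_right)
      · rw [sbjSet_union]
        exact Set.union_subset (hsl1.trans Set.subset_union_left)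
          (hsl2.trans Set.subset_union_right)
      · rw [hat_union, (hA1 A).1, (hA2 A).1, tensor_proj_minLbl]
      · rw [hat_union, (hA1 A).2, (hA2 A).2, tensor_proj_maxLbl]
  | @tch Γ g1 g2 φ1 φ2 Λ1 Λ2 h1 h2 hcomp ih1 ih2 =>
      obtain ⟨E1, hE1, hP1, hI1, hs1, hsl1, hA1⟩ := ih1
      obtain ⟨E2, hE2, hP2, hI2, hs2, hsl2, hA2⟩ := ih2
      have hwb : wb E1 E2 := by
        obtain ⟨A₀, hA₀Γ, hact, huniq, hpass⟩ := hcomp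
        refine ⟨A₀, ?_, ?_, ?_⟩
        · obtain ⟨⟨hdisj, hsub⟩, hne1, hne2⟩ := hact
          refine ⟨?_, ?_, ?_, ?_⟩
          · show (E1.proj A₀).minLbl ≠ ∅
            rw [← (hA1 A₀).1]
            exact hne1
          · show (E2.proj A₀).minLbl ≠ ∅
            rw [← (hA2 A₀).1]
            exact hne2
          · show Disjoint (E1.proj A₀).minLbl (E2.proj A₀).minLbl
            rw [← (hA1 A₀).1, ← (hA2 A₀).1]
            exact hdisj
          · show (E1.proj A₀).minLbl ∪ (E2.proj A₀).minLbl ⊆ Lout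
            rw [← (hA1 A₀).1, ← (hA2 A₀).1]
            exact hsub
        · intro A' hact'
          obtain ⟨hne1, hne2, hdisj, hsub⟩ := hact'
          have hne1' : hat φ1 A' ≠ ∅ := by
            rw [(hA1 A').1]
            exact hne1
          have hΓA' : A' ∈ Γ := by
            obtain ⟨l, hl⟩ := Set.nonempty_iff_ne_empty.mpr hne1'
            exact hs1 ⟨l, hl.1, hl.2⟩
          apply huniq A' hΓA'
          refine ⟨⟨?_, ?_⟩, ?_, ?_⟩
          · rw [(hA1 A').1, (hA2 A').1]
            exact hdisj
          · rw [(hA1 A').1, (hA2 A').1]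
            exact hsub
          · exact hne1'
          · rw [(hA2 A').1]
            exact hne2
        · intro B hB
          by_cases hBΓ : B ∈ Γ
          · obtain ⟨⟨hdisj, hsub⟩, hiff⟩ := hpass B hBΓ hB
            refine ⟨?_, ?_, ?_⟩
            · show Disjoint (E1.proj B).minLbl (E2.proj B).minLbl
              rw [← (hA1 B).1, ← (hA2 B).1]
              exact hdisj
            · show (E1.proj B).minLbl ∪ (E2.proj B).minLbl ⊆ Lin
              rw [← (hA1 B).1, ← (hA2 B).1]
              exact hsub
            · show (E1.proj B).minLbl = ∅ ↔ (E2.proj B).minLbl = ∅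
              rw [← (hA1 B).1, ← (hA2 B).1]
              exact hiff
          · have e1 : minLblP E1 B = ∅ := by
              show (E1.proj B).minLbl = ∅
              rw [← (hA1 B).1]
              exact hat_eq_empty hs1 hBΓ
            have e2 : minLblP E2 B = ∅ := by
              show (E2.proj B).minLbl = ∅
              rw [← (hA2 B).1]
              exact hat_eq_empty hs2 hBΓ
            refine ⟨?_, ?_, ?_⟩
            · rw [e1]
              simp
            · rw [e1, e2]
              simp
            · rw [e1, e2]
      have hevne1 : E1.ev.Nonempty := by
        obtain ⟨A₀, hA₀Γ, -⟩ := hcomp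
        obtain ⟨e, he, -⟩ := hI1.part_ev A₀ hA₀Γ
        exact ⟨e, he⟩
      have hevne2 : E2.ev.Nonempty := by
        obtain ⟨A₀, hA₀Γ, -⟩ := hcomp
        obtain ⟨e, he, -⟩ := hI2.part_ev A₀ hA₀Γ
        exact ⟨e, he⟩
      refine ⟨esSum E1 E2, ?_, ?_, inv_sum hI1 hI2 hevne1 hevne2, ?_, ?_, fun A => ⟨?_, ?_⟩⟩
      · simp only [gsem]
        rw [hE1, hE2]
        simp only [if_pos hwb]
      · show Γ = parts g1 ∪ parts g2
        rw [← hP1, ← hP2, Set.union_self]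
      · rw [sbjSet_union]
        exact Set.union_subset hs1 hs2
      · rw [sbjSet_union]
        exact Set.union_subset hsl1 hsl2
      · rw [hat_union, (hA1 A).1, (hA2 A).1, sum_proj_minLbl, tensor_proj_minLbl]
      · rw [hat_union, (hA1 A).2, (hA2 A).2, sum_proj_maxLbl, tensor_proj_maxLbl]

end MainProof

/-- **Soundness** (Theorem 1): if `Π ⊢ G : ⟨φ,Λ⟩` is derivable then `⟦G⟧ ≠ ⊥`,
`Π = P(G)`, and for all `A ∈ Π`, `φ̂(A) = min(⟦G⟧↾A)` and `Λ̂(A) = max(⟦G⟧↾A)`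
(minimal/maximal events identified with their labels). -/
theorem soundness {P M : Type} [Infinite P] [Infinite M]
    {Γ : Set P} {G : GC P M} {φ Λ : Set (Label P M)}
    (h : Typing Γ G φ Λ) :
    gsem G ≠ none ∧
    ∃ E : ES P M, gsem G = some E ∧ Γ = parts G ∧
      ∀ A ∈ Γ, hat φ A = (E.proj A).minLbl ∧ hat Λ A = (E.proj A).maxLbl := by
  obtain ⟨E, hE, hΓ, hInv, hs1, hs2, hA⟩ := sound_aux h
  exact ⟨by rw [hE]; simp, E, hE, hΓ, fun A _ => hA A⟩

end Choreo
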